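/- arXiv:1005.3187 — 5 statements merged into one kernel-verified Lean document; each statement's English description precedes it below -/
import Mathlib

section
/- Let α ∈ (0,1) and m > 2/α be real numbers. Let τ : [0,∞) → [0,∞) be a nondecreasing right-continuous function with τ(0) = 0, and let X : [0,∞) → ℝ be a right-continuous, locally integrable function. Set Ŷ(ℓ) = ∫_0^{τ(ℓ)} X(u) du, and for s > 0 let Δτ(s) = τ(s) − τ(s−) and ΔŶ(s) = Ŷ(s) − Ŷ(s−) denote the jumps (left limits exist by monotonicity of τ and continuity of the integral). For ε > 0 and b ∈ ℝ let N(ε,b) be the number of s ∈ (0,ε] with b·Δτ(s) > ε^m, and let J(ε) be the number of s ∈ (0,ε] with ΔŶ(s) > ε^m. If for every b > 0 one has lim_{n→∞} n^{1−αm} N(1/n, b) = b^α, then lim_{n→∞} n^{1−αm} J(1/n) = (max(X(0),0))^α, with the convention 0^α = 0. -/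
open MeasureTheory Set Filter Function Topology

/-- **Deterministic core of Theorem 1**: counting large jumps of the time-changed
integral `Ŷ ℓ = ∫_0^{τ ℓ} X` at scale `ε ^ m` on `(0, ε]` recovers `(X 0)⁺ ^ α`,
under the law-of-large-numbers hypothesis for the jump counts of `τ`. -/
theorem stmt0 (α m : ℝ) (hα : α ∈ Set.Ioo (0 : ℝ) 1) (hm : m > 2 / α)
    (τ : ℝ → ℝ) (hτ_mono : MonotoneOn τ (Set.Ici 0))
    (hτ_rc : ∀ s ≥ (0 : ℝ), ContinuousWithinAt τ (Set.Ici s) s)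
    (hτ0 : τ 0 = 0) (hτ_nonneg : ∀ s ≥ (0 : ℝ), 0 ≤ τ s)
    (X : ℝ → ℝ) (hX_rc : ∀ s ≥ (0 : ℝ), ContinuousWithinAt X (Set.Ici s) s)
    (hX_int : LocallyIntegrableOn X (Set.Ici 0))
    (Y : ℝ → ℝ) (hY : ∀ ℓ, Y ℓ = ∫ u in (0 : ℝ)..(τ ℓ), X u)
    (N : ℝ → ℝ → ℕ)
    (hN : ∀ ε > (0 : ℝ), ∀ b : ℝ,
      N ε b = {s ∈ Set.Ioc (0 : ℝ) ε | b * (τ s - leftLim τ s) > ε ^ m}.ncard)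
    (J : ℝ → ℕ)
    (hJ : ∀ ε > (0 : ℝ),
      J ε = {s ∈ Set.Ioc (0 : ℝ) ε | Y s - leftLim Y s > ε ^ m}.ncard)
    (hLLN : ∀ b > (0 : ℝ),
      Tendsto (fun n : ℕ => (n : ℝ) ^ (1 - α * m) * (N (1 / n) b : ℝ))
        atTop (nhds (b ^ α))) :
    Tendsto (fun n : ℕ => (n : ℝ) ^ (1 - α * m) * (J (1 / n) : ℝ))
      atTop (nhds (max (X 0) 0 ^ α)) := by
  obtain ⟨hα0, hα1⟩ := hα
  -- the monotone extension of τ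
  set σ : ℝ → ℝ := fun u => τ (max u 0) with hσdef
  have hσ_mono : Monotone σ := fun u v huv =>
    hτ_mono (le_max_right u 0) (le_max_right v 0) (max_le_max huv le_rfl)
  have hσ_eq : ∀ u : ℝ, 0 ≤ u → σ u = τ u := fun u hu => by
    simp only [hσdef, max_eq_left hu]
  -- the primitive
  set F : ℝ → ℝ := fun t => ∫ u in (0 : ℝ)..t, X u with hFdef
  have hpow_nonneg : ∀ n : ℕ, (0 : ℝ) ≤ (n : ℝ) ^ (1 - α * m) := fun n =>
    Real.rpow_nonneg (Nat.cast_nonneg n) _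
  -- the sandwich inequality for jumps of Y in terms of jumps of τ
  have sandwich : ∀ b₁ b₂ T : ℝ, 0 < T → (∀ u ∈ Icc (0 : ℝ) T, b₁ ≤ X u ∧ X u ≤ b₂) →
      ∀ ε : ℝ, 0 < ε → τ ε ≤ T → ∀ s ∈ Ioc (0 : ℝ) ε,
        b₁ * (τ s - leftLim τ s) ≤ Y s - leftLim Y s ∧
        Y s - leftLim Y s ≤ b₂ * (τ s - leftLim τ s) := by
    intro b₁ b₂ T hT hb ε hε hτεT s hs
    obtain ⟨hs0, hsε⟩ := hs
    have hτs0 : 0 ≤ τ s := hτ_nonneg s hs0.le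
    have hτsT : τ s ≤ T :=
      le_trans (hτ_mono hs0.le (hs0.le.trans hsε) hsε) hτεT
    have hne : 𝓝[<] s ≠ ⊥ := Filter.NeBot.ne inferInstance
    have hIoo : Ioo (0 : ℝ) s ∈ 𝓝[<] s := Ioo_mem_nhdsLT_of_mem ⟨hs0, le_rfl⟩
    have hLdef : Tendsto τ (𝓝[<] s) (𝓝 (leftLim σ s)) := by
      apply (hσ_mono.tendsto_leftLim s).congr'
      filter_upwards [hIoo] with u hu using hσ_eq u hu.1.le
    set L := leftLim σ s with hLdef'
    have hτL : leftLim τ s = L := leftLim_eq_of_tendsto hLdef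
    have hL0 : 0 ≤ L := by
      have := hσ_mono.le_leftLim hs0
      simpa [hσdef, hτ0] using this
    have hLle : L ≤ τ s := by
      have := hσ_mono.leftLim_le (le_refl s)
      rwa [hσ_eq s hs0.le] at this
    have hLT : L ≤ T := hLle.trans hτsT
    have hXint : IntegrableOn X (Icc 0 T) :=
      hX_int.integrableOn_compact_subset (Icc_subset_Ici_self) isCompact_Icc
    have hFcont : ContinuousOn F (Icc 0 T) := by
      have h := intervalIntegral.continuousOn_primitive_interval
        (f := X) (a := (0 : ℝ)) (b := T) (μ := volume)
        (by rwa [uIcc_of_le hT.le])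
      rwa [uIcc_of_le hT.le] at h
    have hYlim : Tendsto Y (𝓝[<] s) (𝓝 (F L)) := by
      have hmem : L ∈ Icc (0 : ℝ) T := ⟨hL0, hLT⟩
      have hτtend : Tendsto τ (𝓝[<] s) (𝓝[Icc (0 : ℝ) T] L) := by
        apply tendsto_nhdsWithin_of_tendsto_nhds_of_eventually_within _ hLdef
        filter_upwards [hIoo] with u hu
        exact ⟨hτ_nonneg u hu.1.le, le_trans (hτ_mono hu.1.le hs0.le hu.2.le) hτsT⟩
      have h := ((hFcont L hmem).tendsto).comp hτtend
      exact h.congr fun u => (hY u).symm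
    have hYL : leftLim Y s = F L := leftLim_eq_of_tendsto hYlim
    have hii1 : IntervalIntegrable X volume 0 (τ s) :=
      (hXint.mono_set (by rw [uIcc_of_le hτs0]; exact Icc_subset_Icc le_rfl hτsT)).intervalIntegrable
    have hii2 : IntervalIntegrable X volume 0 L :=
      (hXint.mono_set (by rw [uIcc_of_le hL0]; exact Icc_subset_Icc le_rfl hLT)).intervalIntegrable
    have hii3 : IntervalIntegrable X volume L (τ s) :=
      (hXint.mono_set (by rw [uIcc_of_le hLle]; exact Icc_subset_Icc hL0 hτsT)).intervalIntegrable
    have hjump : Y s - leftLim Y s = ∫ u in L..(τ s), X u := by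
      rw [hYL, hY s]
      exact intervalIntegral.integral_interval_sub_left hii1 hii2
    have hptsub : Icc L (τ s) ⊆ Icc (0 : ℝ) T := Icc_subset_Icc hL0 hτsT
    have hub : (∫ u in L..(τ s), X u) ≤ b₂ * (τ s - L) := by
      have h := intervalIntegral.integral_mono_on (f := X) (g := fun _ => b₂)
        (μ := volume) hLle hii3 intervalIntegrable_const
        (fun u hu => (hb u (hptsub hu)).2)
      simpa [intervalIntegral.integral_const, smul_eq_mul, mul_comm] using h
    have hlb : b₁ * (τ s - L) ≤ ∫ u in L..(τ s), X u := by
      have h := intervalIntegral.integral_mono_on (f := fun _ => b₁) (g := X)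
        (μ := volume) hLle intervalIntegrable_const hii3
        (fun u hu => (hb u (hptsub hu)).1)
      simpa [intervalIntegral.integral_const, smul_eq_mul, mul_comm] using h
    rw [hτL, hjump]
    exact ⟨hlb, hub⟩
  -- extracting bounds on X near 0 from right continuity
  have hbound : ∀ b₁ b₂ : ℝ, b₁ < X 0 → X 0 < b₂ →
      ∃ T > (0 : ℝ), ∀ u ∈ Icc (0 : ℝ) T, b₁ ≤ X u ∧ X u ≤ b₂ := by
    intro b₁ b₂ hb₁ hb₂
    have hev : ∀ᶠ u in 𝓝[Ici (0 : ℝ)] 0, X u ∈ Ioo b₁ b₂ :=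
      (hX_rc 0 le_rfl) (Ioo_mem_nhds hb₁ hb₂)
    obtain ⟨r, hr, hball⟩ := Metric.mem_nhdsWithin_iff.1 hev
    refine ⟨r / 2, by linarith, fun u hu => ?_⟩
    have hdist : dist u (0 : ℝ) < r := by
      rw [Real.dist_eq, sub_zero, abs_of_nonneg hu.1]; linarith [hu.2]
    have := hball ⟨Metric.mem_ball.mpr hdist, hu.1⟩
    exact ⟨this.1.le, this.2.le⟩
  -- τ is small near 0
  have hτsmall : ∀ T : ℝ, 0 < T → ∃ ε₀ > (0 : ℝ), ∀ ε : ℝ, 0 < ε → ε ≤ ε₀ → τ ε ≤ T := by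
    intro T hT
    have hev : ∀ᶠ u in 𝓝[Ici (0 : ℝ)] 0, τ u < T := by
      have h := hτ_rc 0 le_rfl
      have := h (Iio_mem_nhds (show τ 0 < T by rw [hτ0]; exact hT))
      exact this
    obtain ⟨r, hr, hball⟩ := Metric.mem_nhdsWithin_iff.1 hev
    refine ⟨r / 2, by linarith, fun ε hε hεr => ?_⟩
    have hdist : dist ε (0 : ℝ) < r := by
      rw [Real.dist_eq, sub_zero, abs_of_nonneg hε.le]; linarith
    exact (hball ⟨Metric.mem_ball.mpr hdist, hε.le⟩).le
  -- finiteness of the N-sets, eventually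
  have hfin : ∀ b : ℝ, 0 < b → ∀ᶠ n : ℕ in atTop,
      {s ∈ Ioc (0 : ℝ) (1 / (n : ℝ)) |
        b * (τ s - leftLim τ s) > (1 / (n : ℝ)) ^ m}.Finite := by
    intro b hb
    have hpos : ∀ᶠ n : ℕ in atTop,
        0 < (n : ℝ) ^ (1 - α * m) * (N (1 / n) b : ℝ) :=
      (hLLN b hb).eventually (eventually_gt_nhds (Real.rpow_pos_of_pos hb α))
    filter_upwards [hpos, eventually_gt_atTop 0] with n hn hn0
    have hεpos : (0 : ℝ) < 1 / n := by positivity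
    rw [hN _ hεpos b] at hn
    by_contra hinf
    rw [(Set.not_infinite.not_right.mpr hinf).ncard] at hn
    simp at hn
  -- J ≤ N b for b > max(X 0, 0), eventually
  have hJle : ∀ b : ℝ, X 0 < b → 0 < b → ∀ᶠ n : ℕ in atTop,
      ({s ∈ Ioc (0 : ℝ) (1 / (n : ℝ)) |
        Y s - leftLim Y s > (1 / (n : ℝ)) ^ m}).Finite ∧
      J (1 / (n : ℝ)) ≤ N (1 / (n : ℝ)) b := by
    intro b hbX hb
    obtain ⟨T, hT, hbT⟩ := hbound (X 0 - 1) b (by linarith) hbX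
    obtain ⟨ε₀, hε₀, hτε₀⟩ := hτsmall T hT
    have hev1 : ∀ᶠ n : ℕ in atTop, 1 / (n : ℝ) ≤ ε₀ :=
      tendsto_one_div_atTop_nhds_zero_nat.eventually (eventually_le_nhds hε₀)
    filter_upwards [hfin b hb, hev1, eventually_gt_atTop 0] with n hfinN h1 hn0
    have hεpos : (0 : ℝ) < 1 / n := by positivity
    have hincl : {s ∈ Ioc (0 : ℝ) (1 / (n : ℝ)) |
          Y s - leftLim Y s > (1 / (n : ℝ)) ^ m} ⊆
        {s ∈ Ioc (0 : ℝ) (1 / (n : ℝ)) |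
          b * (τ s - leftLim τ s) > (1 / (n : ℝ)) ^ m} := by
      rintro s ⟨hs, hYs⟩
      exact ⟨hs, lt_of_lt_of_le hYs
        ((sandwich (X 0 - 1) b T hT hbT (1 / n) hεpos (hτε₀ _ hεpos h1) s hs).2)⟩
    refine ⟨hfinN.subset hincl, ?_⟩
    rw [hJ _ hεpos, hN _ hεpos]
    exact Set.ncard_le_ncard hincl hfinN
  -- N b ≤ J for 0 < b < X 0, eventually
  have hNle : ∀ b : ℝ, 0 < b → b < X 0 → ∀ᶠ n : ℕ in atTop,
      N (1 / (n : ℝ)) b ≤ J (1 / (n : ℝ)) := by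
    intro b hb hbX
    have hb2X : X 0 < max (X 0) 0 + 1 := lt_of_le_of_lt (le_max_left _ _) (lt_add_one _)
    have hb2pos : (0 : ℝ) < max (X 0) 0 + 1 :=
      lt_of_le_of_lt (le_max_right _ _) (lt_add_one _)
    obtain ⟨T, hT, hbT⟩ := hbound b (max (X 0) 0 + 1) hbX hb2X
    obtain ⟨ε₀, hε₀, hτε₀⟩ := hτsmall T hT
    have hev1 : ∀ᶠ n : ℕ in atTop, 1 / (n : ℝ) ≤ ε₀ :=
      tendsto_one_div_atTop_nhds_zero_nat.eventually (eventually_le_nhds hε₀)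
    filter_upwards [hJle _ hb2X hb2pos, hev1, eventually_gt_atTop 0] with n hSJ h1 hn0
    obtain ⟨hSJfin, -⟩ := hSJ
    have hεpos : (0 : ℝ) < 1 / n := by positivity
    have hincl : {s ∈ Ioc (0 : ℝ) (1 / (n : ℝ)) |
          b * (τ s - leftLim τ s) > (1 / (n : ℝ)) ^ m} ⊆
        {s ∈ Ioc (0 : ℝ) (1 / (n : ℝ)) |
          Y s - leftLim Y s > (1 / (n : ℝ)) ^ m} := by
      rintro s ⟨hs, hτs⟩
      exact ⟨hs, lt_of_lt_of_le hτs
        ((sandwich b (max (X 0) 0 + 1) T hT hbT (1 / n) hεpos (hτε₀ _ hεpos h1) s hs).1)⟩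
    rw [hJ _ hεpos, hN _ hεpos]
    exact Set.ncard_le_ncard hincl hSJfin
  -- main convergence argument
  set c : ℝ := max (X 0) 0 with hcdef
  have hc0 : 0 ≤ c := le_max_right _ _
  rw [Metric.tendsto_nhds]
  intro δ hδ
  have hcont : ContinuousAt (fun t : ℝ => t ^ α) c :=
    Real.continuousAt_rpow_const c α (Or.inr hα0.le)
  rw [Metric.continuousAt_iff] at hcont
  obtain ⟨η, hη, hηc⟩ := hcont (δ / 2) (by linarith)
  have hupper : ∀ᶠ n : ℕ in atTop,
      (n : ℝ) ^ (1 - α * m) * (J (1 / n) : ℝ) < c ^ α + δ := by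
    set b₂ : ℝ := c + min η 1 / 2 with hb₂def
    have hminpos : 0 < min η 1 := lt_min hη one_pos
    have hb₂pos : 0 < b₂ := by simp only [hb₂def]; linarith
    have hb₂X : X 0 < b₂ := lt_of_le_of_lt (le_max_left (X 0) 0) (by simp only [hb₂def]; linarith)
    have hb₂a : b₂ ^ α < c ^ α + δ / 2 := by
      have hd : dist b₂ c < η := by
        rw [Real.dist_eq]
        have : b₂ - c = min η 1 / 2 := by simp only [hb₂def]; ring
        rw [this, abs_of_pos (by linarith)]
        have := min_le_left η 1
        linarith
      have := hηc hd
      rw [Real.dist_eq, abs_sub_lt_iff] at this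
      linarith [this.1]
    have hNbnd : ∀ᶠ n : ℕ in atTop,
        (n : ℝ) ^ (1 - α * m) * (N (1 / n) b₂ : ℝ) < c ^ α + δ / 2 :=
      (hLLN b₂ hb₂pos).eventually (eventually_lt_nhds hb₂a)
    filter_upwards [hJle b₂ hb₂X hb₂pos, hNbnd] with n hJN hlt
    calc (n : ℝ) ^ (1 - α * m) * (J (1 / n) : ℝ)
        ≤ (n : ℝ) ^ (1 - α * m) * (N (1 / n) b₂ : ℝ) :=
          mul_le_mul_of_nonneg_left (Nat.cast_le.2 hJN.2) (hpow_nonneg n)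
      _ < c ^ α + δ / 2 := hlt
      _ < c ^ α + δ := by linarith
  have hlower : ∀ᶠ n : ℕ in atTop,
      c ^ α - δ < (n : ℝ) ^ (1 - α * m) * (J (1 / n) : ℝ) := by
    rcases le_or_gt (X 0) 0 with hX0 | hX0
    · have hce : c = 0 := max_eq_right hX0
      have hca : c ^ α = 0 := by rw [hce]; exact Real.zero_rpow (ne_of_gt hα0)
      filter_upwards with n
      have hnn : (0 : ℝ) ≤ (n : ℝ) ^ (1 - α * m) * (J (1 / n) : ℝ) :=
        mul_nonneg (hpow_nonneg n) (Nat.cast_nonneg _)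
      rw [hca]
      linarith
    · have hce : c = X 0 := max_eq_left hX0.le
      set b₁ : ℝ := c - min η c / 2 with hb₁def
      have hcpos : 0 < c := by rw [hce]; exact hX0
      have hminpos : 0 < min η c := lt_min hη hcpos
      have hminc : min η c ≤ c := min_le_right _ _
      have hb₁pos : 0 < b₁ := by simp only [hb₁def]; linarith
      have hb₁X : b₁ < X 0 := by rw [← hce]; simp only [hb₁def]; linarith
      have hb₁a : c ^ α - δ / 2 < b₁ ^ α := by
        have hd : dist b₁ c < η := by
          rw [Real.dist_eq]
          have : b₁ - c = -(min η c / 2) := by simp only [hb₁def]; ring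
          rw [this, abs_neg, abs_of_pos (by linarith)]
          have := min_le_left η c
          linarith
        have := hηc hd
        rw [Real.dist_eq, abs_sub_lt_iff] at this
        linarith [this.2]
      have hNbnd : ∀ᶠ n : ℕ in atTop,
          c ^ α - δ / 2 < (n : ℝ) ^ (1 - α * m) * (N (1 / n) b₁ : ℝ) :=
        (hLLN b₁ hb₁pos).eventually (eventually_gt_nhds hb₁a)
      filter_upwards [hNle b₁ hb₁pos hb₁X, hNbnd] with n hNJ hgt
      calc c ^ α - δ < c ^ α - δ / 2 := by linarith
        _ < (n : ℝ) ^ (1 - α * m) * (N (1 / n) b₁ : ℝ) := hgt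
        _ ≤ (n : ℝ) ^ (1 - α * m) * (J (1 / n) : ℝ) :=
            mul_le_mul_of_nonneg_left (Nat.cast_le.2 hNJ) (hpow_nonneg n)
  filter_upwards [hupper, hlower] with n h1 h2
  rw [Real.dist_eq, abs_sub_lt_iff]
  constructor <;> linarith
end

section
/- Let (Ω, F, P) be a probability space and Z : Ω × [0,∞) → ℝ a stochastic process with right-continuous sample paths (each Z_s is measurable). Assume that almost surely there exists n ∈ ℕ such that Z_s(ω) = 0 for all s ∈ [0, 1/n]. Then every event A in the germ σ-field ⋂_{t>0} σ(Z_s : 0 ≤ s ≤ t) satisfies P(A) ∈ {0,1}. -/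
open MeasureTheory Set Filter Topology

/-- If a right-continuous process `Z` almost surely vanishes on an initial interval
`[0, 1/n]`, then its germ σ-field `⋂_{t>0} σ(Z_s : 0 ≤ s ≤ t)` is `P`-trivial. -/
theorem stmt4 {Ω : Type*} [MeasurableSpace Ω] (P : Measure Ω) [IsProbabilityMeasure P]
    (Z : ℝ → Ω → ℝ) (hZ_meas : ∀ s : ℝ, Measurable (Z s))
    (hZ_rc : ∀ ω : Ω, ∀ s ≥ (0 : ℝ), ContinuousWithinAt (fun u => Z u ω) (Set.Ici s) s)
    (hzero : ∀ᵐ ω ∂P, ∃ n : ℕ, 1 ≤ n ∧ ∀ s ∈ Set.Icc (0 : ℝ) (1 / n), Z s ω = 0)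
    (A : Set Ω)
    (hA : MeasurableSet[⨅ t ∈ Set.Ioi (0 : ℝ),
      ⨆ s ∈ Set.Icc (0 : ℝ) t, MeasurableSpace.comap (Z s) inferInstance] A) :
    P A = 0 ∨ P A = 1 := by
  classical
  -- A is measurable w.r.t. each σ(Z_s : s ≤ t), t > 0
  have hAt : ∀ t : ℝ, 0 < t →
      MeasurableSet[⨆ s ∈ Set.Icc (0 : ℝ) t, MeasurableSpace.comap (Z s) inferInstance] A := by
    intro t ht
    exact MeasurableSpace.le_def.mp (iInf₂_le t ht) A hA
  -- invariance: if ω, ω' agree on Z_s for s ∈ [0,t], then ω ∈ A ↔ ω' ∈ A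
  have key : ∀ t : ℝ, 0 < t → ∀ ω ω' : Ω,
      (∀ s ∈ Set.Icc (0 : ℝ) t, Z s ω = Z s ω') → (ω ∈ A ↔ ω' ∈ A) := by
    intro t ht ω ω' hagree
    let m₀ : MeasurableSpace Ω :=
      { MeasurableSet' := fun B => (ω ∈ B ↔ ω' ∈ B)
        measurableSet_empty := Iff.rfl
        measurableSet_compl := fun B hB => not_congr hB
        measurableSet_iUnion := fun f hf => by
          simp only [Set.mem_iUnion]
          exact exists_congr hf }
    have hle : (⨆ s ∈ Set.Icc (0 : ℝ) t, MeasurableSpace.comap (Z s) inferInstance) ≤ m₀ := by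
      refine iSup₂_le fun s hs => ?_
      intro B hB
      obtain ⟨C, -, rfl⟩ := hB
      show ω ∈ Z s ⁻¹' C ↔ ω' ∈ Z s ⁻¹' C
      simp [Set.mem_preimage, hagree s hs]
    exact MeasurableSpace.le_def.mp hle A (hAt t ht)
  -- A is measurable in the ambient σ-algebra
  have hAmeas : MeasurableSet A := by
    have h1 : (⨆ s ∈ Set.Icc (0 : ℝ) 1, MeasurableSpace.comap (Z s) inferInstance)
        ≤ (inferInstance : MeasurableSpace Ω) :=
      iSup₂_le fun s _ => (hZ_meas s).comap_le
    exact MeasurableSpace.le_def.mp h1 A (hAt 1 one_pos)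
  -- the events E n
  set E : ℕ → Set Ω := fun n => {ω | ∀ s ∈ Set.Icc (0 : ℝ) (1 / n), Z s ω = 0} with hE
  have hcover : P {ω | ¬ ∃ n : ℕ, 1 ≤ n ∧ ω ∈ E n} = 0 := by
    have := hzero
    rw [ae_iff] at this
    convert this using 2
    rfl
  by_cases hcase : ∃ n : ℕ, 1 ≤ n ∧ (A ∩ E n).Nonempty
  · -- P A = 1
    right
    obtain ⟨n, hn, ω₀, hω₀A, hω₀E⟩ := hcase
    have hsub : ∀ m : ℕ, 1 ≤ m → E m ⊆ A := by
      intro m hm ω hω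
      -- ω₀ ∈ E (max n m), and E (max n m) ⊆ both
      have hpos : (0 : ℝ) < 1 / m := by positivity
      rcases le_total (1 / (m : ℝ)) (1 / (n : ℝ)) with h | h
      · -- [0,1/m] ⊆ [0,1/n], both ω₀ and ω vanish on [0,1/m]
        have : ∀ s ∈ Set.Icc (0 : ℝ) (1 / m), Z s ω₀ = Z s ω := by
          intro s hs
          rw [hω₀E s (Set.Icc_subset_Icc_right h hs), hω s hs]
        exact (key (1 / m) hpos ω₀ ω this).mp hω₀A
      · have hposn : (0 : ℝ) < 1 / n := by positivity
        have : ∀ s ∈ Set.Icc (0 : ℝ) (1 / n), Z s ω₀ = Z s ω := by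
          intro s hs
          rw [hω₀E s hs, hω s (Set.Icc_subset_Icc_right h hs)]
        exact (key (1 / n) hposn ω₀ ω this).mp hω₀A
    have hcompl : Aᶜ ⊆ {ω | ¬ ∃ n : ℕ, 1 ≤ n ∧ ω ∈ E n} := by
      intro ω hω
      rintro ⟨m, hm, hωE⟩
      exact hω (hsub m hm hωE)
    have : P Aᶜ = 0 := measure_mono_null hcompl hcover
    have := prob_compl_eq_zero_iff hAmeas |>.mp this
    exact this
  · -- P A = 0
    left
    push_neg at hcase
    have hsub : A ⊆ {ω | ¬ ∃ n : ℕ, 1 ≤ n ∧ ω ∈ E n} := by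
      intro ω hωA
      rintro ⟨m, hm, hωE⟩
      exact Set.eq_empty_iff_forall_notMem.mp (hcase m hm) ω ⟨hωA, hωE⟩
    exact measure_mono_null hsub hcover
end

section
/- Let (Ω, F, P) be a probability space, ξ : Ω → (0,∞) a random variable, and for each t ∈ (0,1) let G_t : Ω → [0,∞) be a random variable that is independent of ξ, has the gamma distribution with shape parameter t and rate 1, and such that G_t → 0 almost surely as t → 0+. Then E[ | ξ^{−t} exp((1 − 1/ξ) G_t) − 1 | ] → 0 as t → 0+, i.e. the densities D_t = ξ^{−t} exp((1 − 1/ξ) G_t) converge to 1 in L¹(P). -/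
open MeasureTheory ProbabilityTheory Set Filter Topology
open scoped ENNReal

lemma aux_pdf_mul {t x : ℝ} (ht : 0 < t) (hx : 0 < x) (y : ℝ) :
    gammaPDF t 1 y * ENNReal.ofReal (x ^ (-t) * Real.exp ((1 - 1 / x) * y))
      = gammaPDF t (1 / x) y := by
  rcases lt_or_ge y 0 with hy | hy
  · rw [gammaPDF_of_neg hy, gammaPDF_of_neg hy, zero_mul]
  · rw [gammaPDF_of_nonneg hy, gammaPDF_of_nonneg hy,
      ← ENNReal.ofReal_mul (by positivity)]
    congr 1
    have hxt : x ^ (-t) = (1 / x) ^ t := by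
      rw [one_div, Real.rpow_neg hx.le, ← Real.inv_rpow hx.le]
    have h1 : Real.exp (-(1 * y)) * Real.exp ((1 - 1 / x) * y)
        = Real.exp (-(1 / x * y)) := by
      rw [← Real.exp_add]
      congr 1
      field_simp
      ring
    calc (1 : ℝ) ^ t / Real.Gamma t * y ^ (t - 1) * Real.exp (-(1 * y))
          * (x ^ (-t) * Real.exp ((1 - 1 / x) * y))
        = (1 / x) ^ t / Real.Gamma t * y ^ (t - 1)
            * (Real.exp (-(1 * y)) * Real.exp ((1 - 1 / x) * y)) := by
          rw [Real.one_rpow, hxt]; ring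
      _ = (1 / x) ^ t / Real.Gamma t * y ^ (t - 1) * Real.exp (-(1 / x * y)) := by
          rw [h1]

lemma aux_inner {t x : ℝ} (ht : 0 < t) (hx : 0 < x) :
    ∫⁻ y, ENNReal.ofReal (x ^ (-t) * Real.exp ((1 - 1 / x) * y)) ∂(gammaMeasure t 1) = 1 := by
  have hmg : Measurable (gammaPDF t 1) :=
    (measurable_gammaPDFReal t 1).ennreal_ofReal
  have hmf : Measurable fun y => ENNReal.ofReal (x ^ (-t) * Real.exp ((1 - 1 / x) * y)) :=
    ((measurable_const.mul (Real.measurable_exp.comp (measurable_const.mul measurable_id)))).ennreal_ofReal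
  rw [gammaMeasure, lintegral_withDensity_eq_lintegral_mul _ hmg hmf]
  have : ∀ y, (gammaPDF t 1 * fun y => ENNReal.ofReal (x ^ (-t) * Real.exp ((1 - 1 / x) * y))) y
      = gammaPDF t (1 / x) y := fun y => aux_pdf_mul ht hx y
  rw [lintegral_congr this]
  exact lintegral_gammaPDF_eq_one ht (by positivity)

/-- Scheffé step in Proposition 1: if `ξ > 0` is independent of `G t`, `G t` is gamma
distributed with shape `t` and rate `1`, and `G t → 0` a.s. as `t → 0+`, then the
densities `D t = ξ^(-t) exp((1 - 1/ξ) G t)` converge to `1` in `L¹(P)` as `t → 0+`. -/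
theorem stmt6 {Ω : Type*} [MeasurableSpace Ω] (P : Measure Ω) [IsProbabilityMeasure P]
    (ξ : Ω → ℝ) (hξ_meas : Measurable ξ) (hξ_pos : ∀ ω, 0 < ξ ω)
    (G : ℝ → Ω → ℝ)
    (hG_meas : ∀ t ∈ Set.Ioo (0 : ℝ) 1, Measurable (G t))
    (hG_nonneg : ∀ t ∈ Set.Ioo (0 : ℝ) 1, ∀ ω, 0 ≤ G t ω)
    (hindep : ∀ t ∈ Set.Ioo (0 : ℝ) 1, IndepFun ξ (G t) P)
    (hgamma : ∀ t ∈ Set.Ioo (0 : ℝ) 1, Measure.map (G t) P = gammaMeasure t 1)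
    (hG0 : ∀ᵐ ω ∂P, Tendsto (fun t => G t ω) (𝓝[>] (0 : ℝ)) (nhds 0)) :
    Tendsto (fun t => ∫ ω, |ξ ω ^ (-t) * Real.exp ((1 - 1 / ξ ω) * G t ω) - 1| ∂P)
      (𝓝[>] (0 : ℝ)) (nhds 0) := by
  set D : ℝ → Ω → ℝ := fun t ω => ξ ω ^ (-t) * Real.exp ((1 - 1 / ξ ω) * G t ω) with hDdef
  -- facts for each t ∈ (0,1)
  have hDm : ∀ t ∈ Set.Ioo (0 : ℝ) 1, Measurable (D t) := by
    intro t ht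
    have h1 : Measurable fun ω => ξ ω ^ (-t) := by
      have : (fun ω => ξ ω ^ (-t)) = fun ω => Real.exp (Real.log (ξ ω) * (-t)) := by
        funext ω; rw [Real.rpow_def_of_pos (hξ_pos ω)]
      rw [this]
      exact Real.measurable_exp.comp ((Real.measurable_log.comp hξ_meas).mul measurable_const)
    exact h1.mul (Real.measurable_exp.comp
      ((measurable_const.sub (measurable_const.div hξ_meas)).mul (hG_meas t ht)))
  have hDnn : ∀ t, ∀ ω, 0 ≤ D t ω := fun t ω => by
    have := Real.rpow_nonneg (hξ_pos ω).le (-t)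
    positivity
  -- the lintegral of D t is 1
  have hlint : ∀ t ∈ Set.Ioo (0 : ℝ) 1, ∫⁻ ω, ENNReal.ofReal (D t ω) ∂P = 1 := by
    intro t ht
    set F : ℝ × ℝ → ℝ≥0∞ := fun p =>
      ENNReal.ofReal (Real.exp (Real.log p.1 * (-t)) * Real.exp ((1 - 1 / p.1) * p.2)) with hF
    have hFm : Measurable F := by
      apply Measurable.ennreal_ofReal
      exact (Real.measurable_exp.comp
        ((Real.measurable_log.comp measurable_fst).mul measurable_const)).mul
        (Real.measurable_exp.comp
          ((measurable_const.sub (measurable_const.div measurable_fst)).mul measurable_snd))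
    have hpair : Measurable fun ω => (ξ ω, G t ω) := hξ_meas.prodMk (hG_meas t ht)
    have hmap : Measure.map (fun ω => (ξ ω, G t ω)) P
        = (Measure.map ξ P).prod (gammaMeasure t 1) := by
      rw [← hgamma t ht]
      exact (indepFun_iff_map_prod_eq_prod_map_map hξ_meas.aemeasurable
        (hG_meas t ht).aemeasurable).mp (hindep t ht)
    haveI : IsProbabilityMeasure (gammaMeasure t 1) := isProbabilityMeasure_gammaMeasure ht.1 one_pos
    haveI : IsProbabilityMeasure (Measure.map ξ P) :=
      Measure.isProbabilityMeasure_map hξ_meas.aemeasurable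
    have hDF : ∀ ω, ENNReal.ofReal (D t ω) = F (ξ ω, G t ω) := by
      intro ω
      simp only [hF, hDdef]
      rw [Real.rpow_def_of_pos (hξ_pos ω)]
    have hxpos : ∀ᵐ x ∂(Measure.map ξ P), 0 < x := by
      rw [ae_map_iff hξ_meas.aemeasurable (measurableSet_Ioi : MeasurableSet (Ioi (0:ℝ)))]
      exact ae_of_all _ hξ_pos
    calc ∫⁻ ω, ENNReal.ofReal (D t ω) ∂P
        = ∫⁻ ω, F (ξ ω, G t ω) ∂P := by exact lintegral_congr hDF
      _ = ∫⁻ p, F p ∂(Measure.map (fun ω => (ξ ω, G t ω)) P) :=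
          (lintegral_map hFm hpair).symm
      _ = ∫⁻ x, ∫⁻ y, F (x, y) ∂(gammaMeasure t 1) ∂(Measure.map ξ P) := by
          rw [hmap, lintegral_prod _ hFm.aemeasurable]
      _ = ∫⁻ _, 1 ∂(Measure.map ξ P) := by
          refine lintegral_congr_ae ?_
          filter_upwards [hxpos] with x hx
          have : ∀ y, F (x, y) = ENNReal.ofReal (x ^ (-t) * Real.exp ((1 - 1 / x) * y)) := by
            intro y; simp only [hF]; rw [← Real.rpow_def_of_pos hx]
          rw [lintegral_congr this]
          exact aux_inner ht.1 hx
      _ = 1 := by simp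
  -- integrability and expectation one
  have hint : ∀ t ∈ Set.Ioo (0 : ℝ) 1, Integrable (D t) P := by
    intro t ht
    refine ⟨(hDm t ht).aestronglyMeasurable, ?_⟩
    rw [hasFiniteIntegral_iff_ofReal (ae_of_all _ (hDnn t)), hlint t ht]
    exact ENNReal.one_lt_top
  have hE : ∀ t ∈ Set.Ioo (0 : ℝ) 1, ∫ ω, D t ω ∂P = 1 := by
    intro t ht
    rw [integral_eq_lintegral_of_nonneg_ae (ae_of_all _ (hDnn t))
      (hDm t ht).aestronglyMeasurable, hlint t ht, ENNReal.toReal_one]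
  -- Scheffé identity
  have hMint : ∀ t ∈ Set.Ioo (0 : ℝ) 1, Integrable (fun ω => max (1 - D t ω) 0) P := by
    intro t ht
    refine Integrable.mono' (integrable_const (1 : ℝ))
      (((measurable_const.sub (hDm t ht)).max measurable_const).aestronglyMeasurable)
      (ae_of_all _ fun ω => ?_)
    rw [Real.norm_eq_abs, abs_of_nonneg (le_max_right _ _)]
    exact max_le (by linarith [hDnn t ω]) zero_le_one
  have key : ∀ t ∈ Set.Ioo (0 : ℝ) 1,
      ∫ ω, |D t ω - 1| ∂P = 2 * ∫ ω, max (1 - D t ω) 0 ∂P := by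
    intro t ht
    have hpt : ∀ ω, |D t ω - 1| = (D t ω - 1) + 2 * max (1 - D t ω) 0 := by
      intro ω
      rcases le_total (D t ω) 1 with h | h
      · rw [abs_of_nonpos (by linarith), max_eq_left (by linarith)]; ring
      · rw [abs_of_nonneg (by linarith), max_eq_right (by linarith)]; ring
    simp_rw [hpt]
    have h1 : Integrable (fun ω => D t ω - 1) P := (hint t ht).sub (integrable_const 1)
    have h2 : Integrable (fun ω => 2 * max (1 - D t ω) 0) P := (hMint t ht).const_mul 2
    rw [integral_add h1 h2, integral_sub (hint t ht) (integrable_const 1), hE t ht,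
      integral_const_mul]
    simp
  -- eventual membership in (0,1)
  have hev : ∀ᶠ t in 𝓝[>] (0 : ℝ), t ∈ Set.Ioo (0 : ℝ) 1 :=
    Ioo_mem_nhdsGT_of_mem ⟨le_refl 0, one_pos⟩
  -- dominated convergence for the positive parts
  have hconv : Tendsto (fun t => ∫ ω, max (1 - D t ω) 0 ∂P) (𝓝[>] (0 : ℝ)) (𝓝 0) := by
    have hmeas : ∀ᶠ t in 𝓝[>] (0 : ℝ),
        AEStronglyMeasurable (fun ω => max (1 - D t ω) 0) P := by
      filter_upwards [hev] with t ht
      exact ((measurable_const.sub (hDm t ht)).max measurable_const).aestronglyMeasurable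
    have hbound : ∀ᶠ t in 𝓝[>] (0 : ℝ), ∀ᵐ ω ∂P, ‖max (1 - D t ω) 0‖ ≤ (1 : ℝ) := by
      filter_upwards [hev] with t ht
      refine ae_of_all _ fun ω => ?_
      rw [Real.norm_eq_abs, abs_of_nonneg (le_max_right _ _)]
      exact max_le (by linarith [hDnn t ω]) zero_le_one
    have hlim : ∀ᵐ ω ∂P,
        Tendsto (fun t => max (1 - D t ω) 0) (𝓝[>] (0 : ℝ)) (𝓝 ((fun _ : Ω => (0:ℝ)) ω)) := by
      filter_upwards [hG0] with ω hω
      have h1 : Tendsto (fun t => ξ ω ^ (-t)) (𝓝[>] (0 : ℝ)) (𝓝 1) := by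
        have hc : Continuous fun t : ℝ => ξ ω ^ (-t) := by
          have : (fun t : ℝ => ξ ω ^ (-t)) = fun t => Real.exp (Real.log (ξ ω) * (-t)) := by
            funext s; rw [Real.rpow_def_of_pos (hξ_pos ω)]
          rw [this]
          exact Real.continuous_exp.comp (continuous_const.mul continuous_neg)
        have h := (hc.tendsto 0).mono_left (nhdsWithin_le_nhds (s := Set.Ioi (0:ℝ)))
        simpa using h
      have h2 : Tendsto (fun t => Real.exp ((1 - 1 / ξ ω) * G t ω)) (𝓝[>] (0 : ℝ)) (𝓝 1) := by
        have hmul : Tendsto (fun t => (1 - 1 / ξ ω) * G t ω) (𝓝[>] (0 : ℝ)) (𝓝 0) := by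
          have := hω.const_mul (1 - 1 / ξ ω)
          simpa using this
        have := (Real.continuous_exp.tendsto 0).comp hmul
        simpa [Function.comp_def] using this
      have h3 : Tendsto (fun t => D t ω) (𝓝[>] (0 : ℝ)) (𝓝 1) := by
        have := h1.mul h2
        rw [mul_one] at this
        exact this
      have hfin : Tendsto (fun t => max (1 - D t ω) 0) (𝓝[>] (0 : ℝ)) (𝓝 (max (1 - 1) 0)) :=
        (tendsto_const_nhds.sub h3).max tendsto_const_nhds
      simpa using hfin
    have h := tendsto_integral_filter_of_dominated_convergence (μ := P)
      (F := fun t ω => max (1 - D t ω) 0) (f := fun _ : Ω => (0:ℝ)) (fun _ => (1 : ℝ))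
      hmeas hbound (integrable_const 1) hlim
    simpa using h
  refine Tendsto.congr' ?_ (by simpa using hconv.const_mul 2)
  filter_upwards [hev] with t ht
  exact (key t ht).symm
end

section
/- Let α ∈ (0,1) and m > 2/α be real numbers, let x₀ ∈ ℝ, and let d, r, w : (0,∞) → ℝ be functions such that sup_{0<s≤ε} |r(s)| → 0 as ε → 0+. For ε > 0 and b ∈ ℝ let N(ε,b) be the number of s ∈ (0,ε] with b²·d(s)² > ε^m; for a > 0 let K(ε,a) be the number of s ∈ (0,ε] with w(s)² > a·ε^m; and let J(ε) be the number of s ∈ (0,ε] with (x₀·d(s) + r(s)·d(s) + w(s))² > ε^m. Assume: (i) for every b > 0, lim_{n→∞} n^{1−αm} N(1/n, b) = b^{2α}; and (ii) there is a strictly increasing sequence of positive integers (n(k)) such that for every rational a > 0, lim_{k→∞} n(k)^{1−αm} K(1/n(k), a) = 0. Then lim_{k→∞} n(k)^{1−αm} J(1/n(k)) = |x₀|^{2α}. -/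
open Set Filter Topology ENNReal

private lemma stmt8_sq_le (A w t θ : ℝ) (hθ : 0 < θ) (hθ1 : θ < 1)
    (hA : A ^ 2 ≤ (1 - θ) ^ 2 * t) (hw : w ^ 2 ≤ θ ^ 2 * t) : (A + w) ^ 2 ≤ t := by
  nlinarith [sq_nonneg ((1 - θ) * w - θ * A), mul_pos hθ (by linarith : (0:ℝ) < 1 - θ),
    sq_nonneg (A + w)]

private lemma stmt8_sq_lt (A w t θ c : ℝ) (ht : 0 < t) (hθ : 0 < θ) (hc : θ + 1 < c)
    (hA : c ^ 2 * t < A ^ 2) (hw : w ^ 2 ≤ θ ^ 2 * t) : t < (A + w) ^ 2 := by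
  have hcp : (0:ℝ) < c := by linarith
  have hcθ : (0:ℝ) < c - θ := by linarith
  have p1 : θ * (c - θ) * (c ^ 2 * t) < θ * (c - θ) * A ^ 2 :=
    mul_lt_mul_of_pos_left hA (mul_pos hθ hcθ)
  have p2 : c * (c - θ) * w ^ 2 ≤ c * (c - θ) * (θ ^ 2 * t) :=
    mul_le_mul_of_nonneg_left hw (le_of_lt (mul_pos hcp hcθ))
  have p4 : 0 < θ * c * t * ((c - θ) ^ 2 - 1) := by
    apply mul_pos (mul_pos (mul_pos hθ hcp) ht); nlinarith
  nlinarith [sq_nonneg (θ * A + c * w), mul_pos hθ hcp, p1, p2, p4]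

/-- Deterministic squeeze argument of Proposition 2: if the counts of large jumps of
the driving term `b * d` satisfy a stable-type law of large numbers with limit
`b ^ (2α)`, the coefficient `r` tends to `0` uniformly on small intervals, and the
error counts `K` vanish along a subsequence, then the renormalized counts of large
jumps of `(x₀ + r) * d + w` recover `|x₀| ^ (2α)` along that subsequence.
Counts are taken in `ℝ≥0∞` since they may a priori be infinite. -/
theorem stmt8 (α m : ℝ) (hα : α ∈ Set.Ioo (0 : ℝ) 1) (hm : m > 2 / α)
    (x₀ : ℝ) (d r w : ℝ → ℝ)
    (hr : ∀ δ > (0 : ℝ), ∃ ε > (0 : ℝ), ∀ s ∈ Set.Ioc (0 : ℝ) ε, |r s| < δ)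
    (N : ℝ → ℝ → ℝ≥0∞)
    (hN : ∀ ε > (0 : ℝ), ∀ b : ℝ,
      N ε b = ({s ∈ Set.Ioc (0 : ℝ) ε | b ^ 2 * d s ^ 2 > ε ^ m}.encard : ℝ≥0∞))
    (K : ℝ → ℝ → ℝ≥0∞)
    (hK : ∀ ε > (0 : ℝ), ∀ a : ℝ,
      K ε a = ({s ∈ Set.Ioc (0 : ℝ) ε | w s ^ 2 > a * ε ^ m}.encard : ℝ≥0∞))
    (J : ℝ → ℝ≥0∞)
    (hJ : ∀ ε > (0 : ℝ),
      J ε = ({s ∈ Set.Ioc (0 : ℝ) ε |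
        (x₀ * d s + r s * d s + w s) ^ 2 > ε ^ m}.encard : ℝ≥0∞))
    (hNlim : ∀ b > (0 : ℝ),
      Tendsto (fun n : ℕ => (n : ℝ≥0∞) ^ (1 - α * m) * N (1 / (n : ℝ)) b)
        atTop (nhds (ENNReal.ofReal b ^ (2 * α))))
    (nk : ℕ → ℕ) (hnk_mono : StrictMono nk) (hnk_pos : ∀ k, 0 < nk k)
    (hKlim : ∀ a : ℚ, 0 < a →
      Tendsto (fun k : ℕ => (nk k : ℝ≥0∞) ^ (1 - α * m) * K (1 / (nk k : ℝ)) (a : ℝ))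
        atTop (nhds 0)) :
    Tendsto (fun k : ℕ => (nk k : ℝ≥0∞) ^ (1 - α * m) * J (1 / (nk k : ℝ)))
      atTop (nhds (ENNReal.ofReal |x₀| ^ (2 * α))) := by
  obtain ⟨hα0, hα1⟩ := hα
  have h2α : 0 < 2 * α := by linarith
  set E : ℕ → ℝ := fun k => 1 / (nk k : ℝ) with hE
  have hEpos : ∀ k, 0 < E k := by
    intro k
    have : (0:ℝ) < (nk k : ℝ) := by exact_mod_cast hnk_pos k
    positivity
  have hnkR : Tendsto (fun k => (nk k : ℝ)) atTop atTop :=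
    tendsto_natCast_atTop_atTop.comp hnk_mono.tendsto_atTop
  have hEto : Tendsto E atTop (𝓝 0) := by
    simpa [hE, one_div, Pi.inv_def] using hnkR.inv_tendsto_atTop
  set cnorm : ℕ → ℝ≥0∞ := fun k => (nk k : ℝ≥0∞) ^ (1 - α * m) with hcnorm
  set f : ℕ → ℝ≥0∞ := fun k => cnorm k * J (E k) with hf
  set g : ℝ → ℝ≥0∞ := fun b => ENNReal.ofReal b ^ (2 * α) with hg
  have hgcont : Continuous g := ENNReal.continuous_rpow_const.comp ENNReal.continuous_ofReal
  have hNb : ∀ b : ℝ, 0 < b →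
      Tendsto (fun k => cnorm k * N (E k) b) atTop (𝓝 (g b)) := by
    intro b hb
    exact (hNlim b hb).comp hnk_mono.tendsto_atTop
  have hKc : ∀ a : ℚ, 0 < a →
      Tendsto (fun k => cnorm k * K (E k) (a : ℝ)) atTop (𝓝 0) := hKlim
  -- Upper bound
  have upper : ∀ b : ℝ, |x₀| < b → limsup f atTop ≤ g b := by
    intro b hb
    have hb0 : 0 < b := lt_of_le_of_lt (abs_nonneg x₀) hb
    obtain ⟨θ, hθ0, hθ1⟩ := exists_rat_btwn
      (show (0:ℝ) < (b - |x₀|) / b from div_pos (by linarith) hb0)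
    have hθ0q : 0 < θ := by exact_mod_cast hθ0
    have hθ1' : (θ : ℝ) * b < b - |x₀| := by
      rw [lt_div_iff₀ hb0] at hθ1; linarith
    have hθlt1 : (θ : ℝ) < 1 := by
      have := abs_nonneg x₀
      nlinarith
    set δ : ℝ := (1 - (θ : ℝ)) * b - |x₀| with hδdef
    have hδpos : 0 < δ := by rw [hδdef]; nlinarith
    obtain ⟨ε₀, hε₀pos, hrε⟩ := hr δ hδpos
    set a : ℚ := θ ^ 2 with ha
    have haq : 0 < a := pow_pos hθ0q 2
    have hacast : ((a : ℚ) : ℝ) = (θ : ℝ) ^ 2 := by push_cast [ha]; ring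
    have hev : ∀ᶠ k in atTop,
        f k ≤ cnorm k * N (E k) b + cnorm k * K (E k) (a : ℝ) := by
      filter_upwards [hEto.eventually_le_const hε₀pos] with k hk
      have hEk := hEpos k
      have tpos : 0 < (E k) ^ m := Real.rpow_pos_of_pos hEk m
      have hsub : {s ∈ Set.Ioc (0:ℝ) (E k) | (x₀ * d s + r s * d s + w s) ^ 2 > (E k) ^ m}
          ⊆ {s ∈ Set.Ioc (0:ℝ) (E k) | b ^ 2 * d s ^ 2 > (E k) ^ m}
            ∪ {s ∈ Set.Ioc (0:ℝ) (E k) | w s ^ 2 > (a : ℝ) * (E k) ^ m} := by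
        rintro s ⟨hsI, hbig⟩
        by_cases hws : w s ^ 2 > (a : ℝ) * (E k) ^ m
        · exact Or.inr ⟨hsI, hws⟩
        refine Or.inl ⟨hsI, ?_⟩
        push_neg at hws
        have hws' : w s ^ 2 ≤ (θ : ℝ) ^ 2 * (E k) ^ m := by
          rw [hacast] at hws; exact hws
        have hrs : |r s| < δ := hrε s (Set.Ioc_subset_Ioc_right hk hsI)
        set A : ℝ := (x₀ + r s) * d s with hAdef
        have hbig' : (A + w s) ^ 2 > (E k) ^ m := by
          have heq : x₀ * d s + r s * d s + w s = A + w s := by rw [hAdef]; ring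
          rwa [heq] at hbig
        have hA2 : (1 - (θ : ℝ)) ^ 2 * (E k) ^ m < A ^ 2 := by
          by_contra hcon
          push_neg at hcon
          exact absurd (stmt8_sq_le A (w s) _ _ hθ0 hθlt1 hcon hws') (by linarith)
        have habs : |x₀ + r s| ≤ (1 - (θ : ℝ)) * b := by
          calc |x₀ + r s| ≤ |x₀| + |r s| := abs_add_le _ _
            _ ≤ (1 - (θ : ℝ)) * b := by rw [hδdef] at hrs; linarith
        have hsq : (x₀ + r s) ^ 2 ≤ ((1 - (θ : ℝ)) * b) ^ 2 := by
          rw [← sq_abs]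
          exact pow_le_pow_left₀ (abs_nonneg _) habs 2
        have h1 : A ^ 2 ≤ (1 - (θ : ℝ)) ^ 2 * (b ^ 2 * d s ^ 2) := by
          have := mul_le_mul_of_nonneg_right hsq (sq_nonneg (d s))
          calc A ^ 2 = (x₀ + r s) ^ 2 * d s ^ 2 := by rw [hAdef]; ring
            _ ≤ ((1 - (θ : ℝ)) * b) ^ 2 * d s ^ 2 := this
            _ = (1 - (θ : ℝ)) ^ 2 * (b ^ 2 * d s ^ 2) := by ring
        have h2 : (1 - (θ : ℝ)) ^ 2 * (E k) ^ m < (1 - (θ : ℝ)) ^ 2 * (b ^ 2 * d s ^ 2) :=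
          lt_of_lt_of_le hA2 h1
        exact lt_of_mul_lt_mul_left h2 (sq_nonneg _)
      show cnorm k * J (E k) ≤ cnorm k * N (E k) b + cnorm k * K (E k) (a : ℝ)
      rw [hJ (E k) hEk, hN (E k) hEk b, hK (E k) hEk (a : ℝ), ← mul_add]
      refine mul_le_mul_right ?_ _
      have hcount := le_trans (Set.encard_mono hsub) (Set.encard_union_le _ _)
      exact_mod_cast hcount
    calc limsup f atTop
        ≤ limsup (fun k => cnorm k * N (E k) b + cnorm k * K (E k) (a : ℝ)) atTop :=
          limsup_le_limsup hev
      _ = g b + 0 := ((hNb b hb0).add (hKc a haq)).limsup_eq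
      _ = g b := add_zero _
  -- Lower bound
  have lower : ∀ b : ℝ, b < |x₀| → g b ≤ liminf f atTop := by
    intro b hb
    rcases le_or_gt b 0 with hb0 | hb0
    · have hb0' : ENNReal.ofReal b = 0 := ofReal_eq_zero.mpr hb0
      rw [hg]
      simp only [hb0']
      rw [ENNReal.zero_rpow_of_pos h2α]
      exact zero_le
    · set cc : ℝ := (|x₀| + b) / (2 * b) with hccdef
      have hcc1 : 1 < cc := by
        rw [hccdef, lt_div_iff₀ (by linarith : (0:ℝ) < 2 * b)]; linarith
      obtain ⟨θ, hθ0, hθlt⟩ := exists_rat_btwn (show (0:ℝ) < cc - 1 by linarith)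
      have hθ0q : 0 < θ := by exact_mod_cast hθ0
      have hθc : (θ : ℝ) + 1 < cc := by linarith
      set a : ℚ := θ ^ 2 with ha
      have haq : 0 < a := pow_pos hθ0q 2
      have hacast : ((a : ℚ) : ℝ) = (θ : ℝ) ^ 2 := by push_cast [ha]; ring
      set δ : ℝ := (|x₀| - b) / 2 with hδdef
      have hδpos : 0 < δ := by rw [hδdef]; linarith
      obtain ⟨ε₀, hε₀pos, hrε⟩ := hr δ hδpos
      have hev : ∀ᶠ k in atTop,
          cnorm k * N (E k) b ≤ f k + cnorm k * K (E k) (a : ℝ) := by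
        filter_upwards [hEto.eventually_le_const hε₀pos] with k hk
        have hEk := hEpos k
        have tpos : 0 < (E k) ^ m := Real.rpow_pos_of_pos hEk m
        have hsub : {s ∈ Set.Ioc (0:ℝ) (E k) | b ^ 2 * d s ^ 2 > (E k) ^ m}
            ⊆ {s ∈ Set.Ioc (0:ℝ) (E k) | (x₀ * d s + r s * d s + w s) ^ 2 > (E k) ^ m}
              ∪ {s ∈ Set.Ioc (0:ℝ) (E k) | w s ^ 2 > (a : ℝ) * (E k) ^ m} := by
          rintro s ⟨hsI, hbig⟩
          by_cases hws : w s ^ 2 > (a : ℝ) * (E k) ^ m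
          · exact Or.inr ⟨hsI, hws⟩
          refine Or.inl ⟨hsI, ?_⟩
          push_neg at hws
          have hws' : w s ^ 2 ≤ (θ : ℝ) ^ 2 * (E k) ^ m := by
            rw [hacast] at hws; exact hws
          have hrs : |r s| < δ := hrε s (Set.Ioc_subset_Ioc_right hk hsI)
          set A : ℝ := (x₀ + r s) * d s with hAdef
          have habs : cc * b ≤ |x₀ + r s| := by
            have h1 : |x₀| - |r s| ≤ |x₀ + r s| := by
              have := abs_sub_abs_le_abs_sub x₀ (-(r s))
              simp only [abs_neg, sub_neg_eq_add] at this
              linarith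
            have h2 : cc * b = |x₀| - δ := by
              rw [hccdef, hδdef]; field_simp; ring
            linarith
          have hccb : 0 < cc * b := mul_pos (by linarith) hb0
          have hsq : (cc * b) ^ 2 ≤ (x₀ + r s) ^ 2 := by
            rw [← sq_abs (x₀ + r s)]
            exact pow_le_pow_left₀ hccb.le habs 2
          have hA2 : cc ^ 2 * (E k) ^ m < A ^ 2 := by
            have h3 : cc ^ 2 * (b ^ 2 * d s ^ 2) ≤ A ^ 2 := by
              have := mul_le_mul_of_nonneg_right hsq (sq_nonneg (d s))
              calc cc ^ 2 * (b ^ 2 * d s ^ 2) = (cc * b) ^ 2 * d s ^ 2 := by ring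
                _ ≤ (x₀ + r s) ^ 2 * d s ^ 2 := this
                _ = A ^ 2 := by rw [hAdef]; ring
            have h4 : cc ^ 2 * (E k) ^ m < cc ^ 2 * (b ^ 2 * d s ^ 2) :=
              mul_lt_mul_of_pos_left hbig (by positivity)
            linarith
          have := stmt8_sq_lt A (w s) ((E k) ^ m) (θ : ℝ) cc tpos hθ0 hθc hA2 hws'
          have heq : x₀ * d s + r s * d s + w s = A + w s := by rw [hAdef]; ring
          rw [heq]
          exact this
        show cnorm k * N (E k) b ≤ cnorm k * J (E k) + cnorm k * K (E k) (a : ℝ)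
        rw [hJ (E k) hEk, hN (E k) hEk b, hK (E k) hEk (a : ℝ), ← mul_add]
        refine mul_le_mul_right ?_ _
        have hcount := le_trans (Set.encard_mono hsub) (Set.encard_union_le _ _)
        exact_mod_cast hcount
      apply ENNReal.le_of_forall_pos_le_add
      intro η hη _
      have hevK : ∀ᶠ k in atTop, cnorm k * K (E k) (a : ℝ) ≤ (η : ℝ≥0∞) :=
        (hKc a haq).eventually_le_const (by exact_mod_cast hη)
      have hev2 : ∀ᶠ k in atTop, cnorm k * N (E k) b ≤ f k + (η : ℝ≥0∞) := by
        filter_upwards [hev, hevK] with k h1 h2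
        exact h1.trans (add_le_add_right h2 _)
      calc g b = liminf (fun k => cnorm k * N (E k) b) atTop := (hNb b hb0).liminf_eq.symm
        _ ≤ liminf (fun k => f k + (η : ℝ≥0∞)) atTop := liminf_le_liminf hev2
        _ = liminf f atTop + (η : ℝ≥0∞) :=
          liminf_add_const atTop f (η : ℝ≥0∞) (by isBoundedDefault) (by isBoundedDefault)
  -- Conclusion
  have hlimsup : limsup f atTop ≤ g |x₀| := by
    by_contra hcon
    push_neg at hcon
    have hcont : Tendsto g (𝓝[>] |x₀|) (𝓝 (g |x₀|)) :=
      (hgcont.tendsto _).mono_left nhdsWithin_le_nhds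
    have hev : ∀ᶠ b in 𝓝[>] |x₀|, g b < limsup f atTop :=
      hcont.eventually_lt_const hcon
    obtain ⟨b, hblt, hbmem⟩ := (hev.and eventually_mem_nhdsWithin).exists
    exact absurd (upper b hbmem) (not_le.mpr hblt)
  have hliminf : g |x₀| ≤ liminf f atTop := by
    by_contra hcon
    push_neg at hcon
    have hcont : Tendsto g (𝓝[<] |x₀|) (𝓝 (g |x₀|)) :=
      (hgcont.tendsto _).mono_left nhdsWithin_le_nhds
    have hev : ∀ᶠ b in 𝓝[<] |x₀|, liminf f atTop < g b :=
      hcont.eventually_const_lt hcon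
    obtain ⟨b, hblt, hbmem⟩ := (hev.and eventually_mem_nhdsWithin).exists
    exact absurd (lower b hbmem) (not_le.mpr hblt)
  exact tendsto_of_le_liminf_of_limsup_le hliminf hlimsup
end

section
/- Let α ∈ (0,1) and m > 2/α be real numbers, and let (Ω, F, P) be a probability space. Let X : Ω × [0,∞) → ℝ be a process whose sample paths are right-continuous and locally integrable, and let τ : Ω × [0,∞) → [0,∞) be a process whose sample paths are nondecreasing and right-continuous with τ_0 = 0, with all X_s and τ_s measurable. Define Ŷ_ℓ = ∫_0^{τ_ℓ} X_u du, and for ε > 0, b ∈ ℝ let N_{ε,b} be the number of s ∈ (0,ε] with b·(τ_s − τ_{s−}) > ε^m. Assume that almost surely, for every b > 0, lim_{n→∞} n^{1−αm} N_{1/n,b} = b^α. Then there exists a random variable Z measurable with respect to the germ σ-field ⋂_{t>0} σ(Ŷ_s : 0 ≤ s ≤ t) such that Z = X_0 almost surely. -/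
open MeasureTheory Set Filter Function Topology
open scoped ENNReal NNReal

namespace Stmt11Aux

/-- Sum-of-jumps bound for a monotone function. -/
lemma card_mul_le (g : ℝ → ℝ) (hg : Monotone g) {θ : ℝ} :
    ∀ F : Finset ℝ, (∀ x ∈ F, 0 < x ∧ θ ≤ g x - leftLim g x) →
      ∀ (hne : F.Nonempty), (F.card : ℝ) * θ ≤ g (F.max' hne) - g 0 := by
  classical
  intro F
  induction F using Finset.induction_on_max with
  | empty => intro _ hne; simp at hne
  | insert a s hlt ih =>
    intro hmem hne
    have ha := hmem a (Finset.mem_insert_self a s)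
    have hanotmem : a ∉ s := fun h => lt_irrefl a (hlt a h)
    have hmax : (insert a s).max' hne = a := by
      refine le_antisymm (Finset.max'_le _ _ _ ?_) (Finset.le_max' _ a (Finset.mem_insert_self a s))
      intro x hx
      rcases Finset.mem_insert.mp hx with rfl | hx
      · exact le_rfl
      · exact (hlt x hx).le
    have hcard : (insert a s).card = s.card + 1 := Finset.card_insert_of_notMem hanotmem
    have h0a : g 0 ≤ leftLim g a := hg.le_leftLim ha.1
    rcases s.eq_empty_or_nonempty with rfl | hs
    · rw [hmax]
      have : (insert a (∅:Finset ℝ)).card = 1 := by simp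
      rw [this]
      push_cast
      linarith [ha.2]
    · have ihs := ih (fun x hx => hmem x (Finset.mem_insert_of_mem hx)) hs
      have h1 : g (s.max' hs) ≤ leftLim g a := hg.le_leftLim (hlt _ (s.max'_mem hs))
      rw [hmax, hcard]
      push_cast
      nlinarith [ha.2]


/-- The set of jumps of size at least `θ > 0` in `(0, ε]` of a monotone function is finite. -/
lemma finite_jumps (g : ℝ → ℝ) (hg : Monotone g) {θ : ℝ} (hθ : 0 < θ) (ε : ℝ) :
    {s : ℝ | s ∈ Ioc (0:ℝ) ε ∧ θ ≤ g s - leftLim g s}.Finite := by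
  by_contra hinf
  rw [← Set.not_infinite, not_not] at hinf
  obtain ⟨F, hFsub, hFcard⟩ := hinf.exists_subset_card_eq (⌈(g ε - g 0)/θ⌉₊ + 1)
  have hne : F.Nonempty := Finset.card_pos.mp (by omega)
  have hb := card_mul_le g hg F
      (fun x hx => ⟨(hFsub hx).1.1, (hFsub hx).2⟩) hne
  have hmm : F.max' hne ∈ F := F.max'_mem hne
  have hle : g (F.max' hne) ≤ g ε := hg (hFsub hmm).1.2
  rw [hFcard] at hb
  have hceil : (g ε - g 0)/θ ≤ (⌈(g ε - g 0)/θ⌉₊ : ℝ) := Nat.le_ceil _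
  have h2 : g ε - g 0 ≤ (⌈(g ε - g 0)/θ⌉₊ : ℝ) * θ := by
    rw [div_le_iff₀ hθ] at hceil; linarith
  push_cast at hb
  nlinarith

/-- Uniform smallness of increments away from large jumps, for a monotone
right-continuous function. -/
lemma osc (g : ℝ → ℝ) (hg : Monotone g)
    (hrc : ∀ s : ℝ, 0 ≤ s → ContinuousWithinAt g (Ici s) s) {θ : ℝ} (hθ : 0 < θ) (ε : ℝ) :
    ∃ δ > (0:ℝ), ∀ u v : ℝ, 0 ≤ u → u ≤ v → v ≤ ε → v - u < δ →
      (∀ s ∈ Ioc u v, g s - leftLim g s < θ) → g v - g u ≤ θ := by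
  by_contra hcon
  push_neg at hcon
  have H : ∀ p : ℕ, ∃ u v : ℝ, 0 ≤ u ∧ u ≤ v ∧ v ≤ ε ∧ v - u < 1/((p:ℝ)+1) ∧
      (∀ s ∈ Ioc u v, g s - leftLim g s < θ) ∧ θ < g v - g u := by
    intro p
    obtain ⟨u, v, h⟩ := hcon (1/((p:ℝ)+1)) (by positivity)
    exact ⟨u, v, h⟩
  choose U V h0 h1 h2 h3 h4 h5 using H
  have hUmem : ∀ p, U p ∈ Icc (0:ℝ) ε := fun p => ⟨h0 p, (h1 p).trans (h2 p)⟩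
  obtain ⟨s₀, hs₀cl, φ, hφ, hUlim⟩ :=
    tendsto_subseq_of_bounded (Metric.isBounded_Icc 0 ε) hUmem
  rw [isClosed_Icc.closure_eq] at hs₀cl
  have hs₀0 : (0:ℝ) ≤ s₀ := hs₀cl.1
  have hdiff : Tendsto (fun p => V (φ p) - U (φ p)) atTop (𝓝 0) := by
    refine squeeze_zero (g := fun p : ℕ => 1/((p:ℝ)+1)) (fun p => by linarith [h1 (φ p)])
      (fun p => (h3 (φ p)).le.trans ?_) tendsto_one_div_add_atTop_nhds_zero_nat
    have hpf : (p:ℝ) ≤ (φ p : ℝ) := by exact_mod_cast hφ.le_apply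
    apply one_div_le_one_div_of_le (by positivity) (by linarith)
  have hVlim : Tendsto (fun p => V (φ p)) atTop (𝓝 s₀) := by
    have := hUlim.add hdiff
    simpa using this
  by_cases hP : ∃ᶠ p in atTop, s₀ ∈ Ioc (U (φ p)) (V (φ p))
  · obtain ⟨ψ, hψ, hPψ⟩ := Filter.extraction_of_frequently_atTop hP
    have hUl : Tendsto (fun p => g (U (φ (ψ p)))) atTop (𝓝 (leftLim g s₀)) := by
      apply (hg.tendsto_leftLim s₀).comp
      rw [tendsto_nhdsWithin_iff]
      exact ⟨hUlim.comp hψ.tendsto_atTop, Eventually.of_forall fun p => (hPψ p).1⟩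
    have hVl : Tendsto (fun p => g (V (φ (ψ p)))) atTop (𝓝 (g s₀)) := by
      apply (hrc s₀ hs₀0).tendsto.comp
      rw [tendsto_nhdsWithin_iff]
      exact ⟨hVlim.comp hψ.tendsto_atTop, Eventually.of_forall fun p => (hPψ p).2⟩
    have hjump : θ ≤ g s₀ - leftLim g s₀ :=
      ge_of_tendsto' (hVl.sub hUl) (fun p => (h5 (φ (ψ p))).le)
    exact absurd (h4 (φ (ψ 0)) s₀ (hPψ 0)) (by linarith)
  · by_cases hQ : ∃ᶠ p in atTop, V (φ p) < s₀
    · obtain ⟨ψ, hψ, hQψ⟩ := Filter.extraction_of_frequently_atTop hQ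
      have hUl : Tendsto (fun p => g (U (φ (ψ p)))) atTop (𝓝 (leftLim g s₀)) := by
        apply (hg.tendsto_leftLim s₀).comp
        rw [tendsto_nhdsWithin_iff]
        exact ⟨hUlim.comp hψ.tendsto_atTop,
          Eventually.of_forall fun p => lt_of_le_of_lt (h1 _) (hQψ p)⟩
      have hVl : Tendsto (fun p => g (V (φ (ψ p)))) atTop (𝓝 (leftLim g s₀)) := by
        apply (hg.tendsto_leftLim s₀).comp
        rw [tendsto_nhdsWithin_iff]
        exact ⟨hVlim.comp hψ.tendsto_atTop, Eventually.of_forall fun p => hQψ p⟩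
      have : θ ≤ leftLim g s₀ - leftLim g s₀ :=
        ge_of_tendsto' (hVl.sub hUl) (fun p => (h5 (φ (ψ p))).le)
      linarith
    · have hev : ∀ᶠ p in atTop, s₀ ≤ U (φ p) := by
        have h1' := not_frequently.mp hP
        have h2' := not_frequently.mp hQ
        filter_upwards [h1', h2'] with p hp hq
        rw [mem_Ioc, not_and_or] at hp
        rcases hp with hp | hp
        · exact le_of_not_gt hp
        · exact absurd (lt_of_not_ge hp) hq
      have hUl : Tendsto (fun p => g (U (φ p))) atTop (𝓝 (g s₀)) := by
        apply (hrc s₀ hs₀0).tendsto.comp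
        rw [tendsto_nhdsWithin_iff]
        exact ⟨hUlim, hev⟩
      have hVl : Tendsto (fun p => g (V (φ p))) atTop (𝓝 (g s₀)) := by
        apply (hrc s₀ hs₀0).tendsto.comp
        rw [tendsto_nhdsWithin_iff]
        exact ⟨hVlim, hev.mono fun p hp => hp.trans (h1 (φ p))⟩
      have : θ ≤ g s₀ - g s₀ :=
        ge_of_tendsto' (hVl.sub hUl) (fun p => (h5 (φ p)).le)
      linarith


/-- Lower bound: for fine grids, the number of grid cells with increment `> θ` is at
least the number of jumps of size `> θ`. -/
lemma gridLower (g : ℝ → ℝ) (hg : Monotone g) {θ ε : ℝ} (hθ : 0 < θ) (hε : 0 < ε)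
    (hfin : {s : ℝ | s ∈ Ioc (0:ℝ) ε ∧ θ < g s - leftLim g s}.Finite) :
    ∀ᶠ j : ℕ in atTop, hfin.toFinset.card ≤
      ((Finset.range j).filter
        (fun i : ℕ => θ < g (((i:ℝ)+1) * ε / (j:ℝ)) - g ((i:ℝ) * ε / (j:ℝ)))).card := by
  classical
  set T := hfin.toFinset with hT
  -- a positive lower bound for gaps between distinct jump points
  obtain ⟨γ, hγ, hgap⟩ : ∃ γ > (0:ℝ), ∀ a ∈ T, ∀ b ∈ T, a ≠ b → γ ≤ |a - b| := by
    by_cases hod : T.offDiag.Nonempty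
    · refine ⟨(T.offDiag.image fun p => |p.1 - p.2|).min' (hod.image _), ?_, ?_⟩
      · have hmem := (T.offDiag.image fun p => |p.1 - p.2|).min'_mem (hod.image _)
        rw [Finset.mem_image] at hmem
        obtain ⟨p, hp, hpe⟩ := hmem
        rw [Finset.mem_offDiag] at hp
        rw [← hpe]
        exact abs_pos.mpr (sub_ne_zero.mpr hp.2.2)
      · intro a ha b hb hab
        apply Finset.min'_le
        exact Finset.mem_image.mpr ⟨(a, b), Finset.mem_offDiag.mpr ⟨ha, hb, hab⟩, rfl⟩
    · refine ⟨1, one_pos, fun a ha b hb hab => absurd ?_ hod⟩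
      exact ⟨(a, b), Finset.mem_offDiag.mpr ⟨ha, hb, hab⟩⟩
  rw [eventually_atTop]
  refine ⟨⌈ε/γ⌉₊ + 1, fun j hj => ?_⟩
  have hj1 : 1 ≤ j := le_trans (by omega) hj
  have hjR : (0:ℝ) < j := by exact_mod_cast hj1
  have hmesh : ε / (j:ℝ) < γ := by
    have h1 : ε/γ < (j:ℝ) := by
      calc ε/γ ≤ (⌈ε/γ⌉₊ : ℝ) := Nat.le_ceil _
      _ < (j:ℝ) := by exact_mod_cast hj
    rw [div_lt_iff₀ hjR]
    rw [div_lt_iff₀ hγ] at h1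
    linarith
  apply Finset.card_le_card_of_injOn (fun s => ⌈s * (j:ℝ) / ε⌉₊ - 1)
  · intro s hsT
    have hs := hfin.mem_toFinset.mp hsT
    obtain ⟨⟨hs0, hsε⟩, hjump⟩ := hs
    set x := s * (j:ℝ) / ε with hx
    have hx0 : 0 < x := by positivity
    set c := ⌈x⌉₊ with hc
    have hc1 : 1 ≤ c := Nat.one_le_iff_ne_zero.mpr (by
      simp only [hc, ne_eq, Nat.ceil_eq_zero, not_le]; exact hx0)
    have hcast : ((c - 1 : ℕ) : ℝ) = (c:ℝ) - 1 := by
      push_cast [Nat.cast_sub hc1]; ring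
    have hcj : c ≤ j := by
      rw [hc, Nat.ceil_le, hx]
      rw [div_le_iff₀ hε]
      calc s * (j:ℝ) ≤ ε * j := by nlinarith
      _ = (j:ℝ) * ε := by ring
    have hub : x ≤ (c:ℝ) := Nat.le_ceil x
    have hlb : (c:ℝ) - 1 < x := by
      have := Nat.ceil_lt_add_one hx0.le
      linarith
    have htlt : ((c - 1 : ℕ):ℝ) * ε / (j:ℝ) < s := by
      rw [hcast, div_lt_iff₀ hjR]
      have : ((c:ℝ) - 1) * ε < x * ε := by nlinarith
      rw [hx] at this
      calc ((c:ℝ)-1) * ε < s * (j:ℝ) / ε * ε := this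
      _ = s * (j:ℝ) := by field_simp
    have htge : s ≤ (((c-1:ℕ):ℝ) + 1) * ε / (j:ℝ) := by
      rw [hcast]
      have h2 : s * (j:ℝ) ≤ (c:ℝ) * ε := by
        rw [hx, div_le_iff₀ hε] at hub
        linarith [hub]
      rw [le_div_iff₀ hjR]
      calc s * (j:ℝ) ≤ (c:ℝ) * ε := h2
      _ = ((c:ℝ) - 1 + 1) * ε := by ring
    rw [Finset.mem_coe, Finset.mem_filter]
    show c - 1 ∈ _ ∧ _
    constructor
    · rw [Finset.mem_range]; omega
    · have hg1 : g s ≤ g ((((c-1:ℕ):ℝ) + 1) * ε / (j:ℝ)) := hg htge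
      have hg2 : g (((c-1:ℕ):ℝ) * ε / (j:ℝ)) ≤ leftLim g s := hg.le_leftLim htlt
      linarith
  · intro a haT b hbT hab
    by_contra hne
    have hsa := hfin.mem_toFinset.mp haT
    have hsb := hfin.mem_toFinset.mp hbT
    -- both a and b lie in the same cell, of length ε/j < γ
    have key : ∀ s : ℝ, s ∈ Ioc (0:ℝ) ε →
        ((⌈s * (j:ℝ) / ε⌉₊ - 1 : ℕ):ℝ) * ε / (j:ℝ) < s ∧
        s ≤ (((⌈s * (j:ℝ) / ε⌉₊ - 1 : ℕ):ℝ) + 1) * ε / (j:ℝ) := by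
      intro s hs
      obtain ⟨hs0, hsε⟩ := hs
      set x := s * (j:ℝ) / ε with hx
      have hx0 : 0 < x := by positivity
      set c := ⌈x⌉₊ with hc
      have hc1 : 1 ≤ c := Nat.one_le_iff_ne_zero.mpr (by
        simp only [hc, ne_eq, Nat.ceil_eq_zero, not_le]; exact hx0)
      have hcast : ((c - 1 : ℕ) : ℝ) = (c:ℝ) - 1 := by
        push_cast [Nat.cast_sub hc1]; ring
      have hub : x ≤ (c:ℝ) := Nat.le_ceil x
      have hlb : (c:ℝ) - 1 < x := by
        have := Nat.ceil_lt_add_one hx0.le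
        linarith
      constructor
      · rw [hcast, div_lt_iff₀ hjR]
        have : ((c:ℝ) - 1) * ε < x * ε := by nlinarith
        rw [hx] at this
        calc ((c:ℝ)-1) * ε < s * (j:ℝ) / ε * ε := this
        _ = s * (j:ℝ) := by field_simp
      · rw [hcast, le_div_iff₀ hjR]
        have h2 : s * (j:ℝ) ≤ (c:ℝ) * ε := by
          rw [hx, div_le_iff₀ hε] at hub
          linarith [hub]
        calc s * (j:ℝ) ≤ (c:ℝ) * ε := h2
        _ = ((c:ℝ) - 1 + 1) * ε := by ring
    obtain ⟨ha1, ha2⟩ := key a hsa.1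
    obtain ⟨hb1, hb2⟩ := key b hsb.1
    simp only at hab
    rw [hab] at ha1 ha2
    have hsplit : ∀ y:ℝ, (y+1)*ε/(j:ℝ) = y*ε/(j:ℝ) + ε/(j:ℝ) := by
      intro y; field_simp
    rw [hsplit] at ha2 hb2
    have : |a - b| < ε / (j:ℝ) := by
      rw [abs_sub_lt_iff]
      constructor <;> linarith
    have := hgap a haT b hbT hne
    linarith

/-- Upper bound: for fine grids, the number of grid cells with increment `> θ` is at most
the number of jumps of size `≥ θ`. -/
lemma gridUpper (g : ℝ → ℝ) (hg : Monotone g)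
    (hrc : ∀ s : ℝ, 0 ≤ s → ContinuousWithinAt g (Ici s) s)
    {θ ε : ℝ} (hθ : 0 < θ) (hε : 0 < ε) :
    ∀ᶠ j : ℕ in atTop,
      ((Finset.range j).filter
        (fun i : ℕ => θ < g (((i:ℝ)+1) * ε / (j:ℝ)) - g ((i:ℝ) * ε / (j:ℝ)))).card ≤
      (finite_jumps g hg hθ ε).toFinset.card := by
  classical
  obtain ⟨δ, hδ, hosc⟩ := osc g hg hrc hθ ε
  rw [eventually_atTop]
  refine ⟨⌈ε/δ⌉₊ + 1, fun j hj => ?_⟩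
  have hj1 : 1 ≤ j := le_trans (by omega) hj
  have hjR : (0:ℝ) < j := by exact_mod_cast hj1
  have hmesh : ε / (j:ℝ) < δ := by
    have h1 : ε/δ < (j:ℝ) := by
      calc ε/δ ≤ (⌈ε/δ⌉₊ : ℝ) := Nat.le_ceil _
      _ < (j:ℝ) := by exact_mod_cast hj
    rw [div_lt_iff₀ hjR]
    rw [div_lt_iff₀ hδ] at h1
    linarith
  -- for each cell with a large increment, there is a jump point of size ≥ θ inside
  have hwit : ∀ i ∈ (Finset.range j).filter
      (fun i : ℕ => θ < g (((i:ℝ)+1) * ε / (j:ℝ)) - g ((i:ℝ) * ε / (j:ℝ))),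
      ∃ s, s ∈ Ioc ((i:ℝ) * ε / (j:ℝ)) (((i:ℝ)+1) * ε / (j:ℝ)) ∧ θ ≤ g s - leftLim g s := by
    intro i hi
    rw [Finset.mem_filter, Finset.mem_range] at hi
    obtain ⟨hij, hinc⟩ := hi
    by_contra hno
    push_neg at hno
    have hup : (((i:ℝ)+1) * ε / (j:ℝ)) ≤ ε := by
      rw [div_le_iff₀ hjR]
      have : (i:ℝ) + 1 ≤ (j:ℝ) := by exact_mod_cast hij
      nlinarith
    have hlow : (0:ℝ) ≤ (i:ℝ) * ε / (j:ℝ) := by positivity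
    have hmono : (i:ℝ) * ε / (j:ℝ) ≤ ((i:ℝ)+1) * ε / (j:ℝ) := by
      apply (div_le_div_iff_of_pos_right hjR).mpr; nlinarith
    have hlen : ((i:ℝ)+1) * ε / (j:ℝ) - (i:ℝ) * ε / (j:ℝ) < δ := by
      have heq : ((i:ℝ)+1) * ε / (j:ℝ) - (i:ℝ) * ε / (j:ℝ) = ε / (j:ℝ) := by
        field_simp; ring
      rw [heq]; exact hmesh
    have hcontra := hosc _ _ hlow hmono hup hlen hno
    linarith
  -- choose witnesses and build an injection
  set w : ℕ → ℝ := fun i => if h : ∃ s, s ∈ Ioc ((i:ℝ) * ε / (j:ℝ)) (((i:ℝ)+1) * ε / (j:ℝ)) ∧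
      θ ≤ g s - leftLim g s then h.choose else 0 with hw
  apply Finset.card_le_card_of_injOn w
  · intro i hi
    obtain ⟨s, hs⟩ := hwit i hi
    have hex : ∃ s, s ∈ Ioc ((i:ℝ) * ε / (j:ℝ)) (((i:ℝ)+1) * ε / (j:ℝ)) ∧
        θ ≤ g s - leftLim g s := ⟨s, hs⟩
    have hws := hex.choose_spec
    rw [Finset.mem_coe, Finset.mem_filter, Finset.mem_range] at hi
    rw [Finset.mem_coe, (finite_jumps g hg hθ ε).mem_toFinset]
    have hwival : w i = hex.choose := by rw [hw]; simp only [dif_pos hex]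
    rw [hwival]
    have hup : (((i:ℝ)+1) * ε / (j:ℝ)) ≤ ε := by
      rw [div_le_iff₀ hjR]
      have : (i:ℝ) + 1 ≤ (j:ℝ) := by exact_mod_cast hi.1
      nlinarith
    have hlow : (0:ℝ) ≤ (i:ℝ) * ε / (j:ℝ) := by positivity
    exact ⟨⟨lt_of_le_of_lt hlow hws.1.1, hws.1.2.trans hup⟩, hws.2⟩
  · intro a haf b hbf hab
    by_contra hne
    obtain ⟨sa, hsa⟩ := hwit a haf
    obtain ⟨sb, hsb⟩ := hwit b hbf
    have hexa : ∃ s, s ∈ Ioc ((a:ℝ) * ε / (j:ℝ)) (((a:ℝ)+1) * ε / (j:ℝ)) ∧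
        θ ≤ g s - leftLim g s := ⟨sa, hsa⟩
    have hexb : ∃ s, s ∈ Ioc ((b:ℝ) * ε / (j:ℝ)) (((b:ℝ)+1) * ε / (j:ℝ)) ∧
        θ ≤ g s - leftLim g s := ⟨sb, hsb⟩
    have hwa : w a = hexa.choose := by rw [hw]; simp only [dif_pos hexa]
    have hwb : w b = hexb.choose := by rw [hw]; simp only [dif_pos hexb]
    have hA := hexa.choose_spec.1
    have hB := hexb.choose_spec.1
    rw [hwa, hwb] at hab
    rw [hab] at hA
    -- hexb.choose lies in both cells a and b, with a ≠ b : contradiction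
    rcases Nat.lt_or_ge a b with hlt | hge
    · have h1 : ((a:ℝ)+1) ≤ (b:ℝ) := by exact_mod_cast hlt
      have : ((a:ℝ)+1) * ε / (j:ℝ) ≤ (b:ℝ) * ε / (j:ℝ) := by
        apply (div_le_div_iff_of_pos_right hjR).mpr; nlinarith
      linarith [hA.2, hB.1]
    · have hlt : b < a := lt_of_le_of_ne hge (fun h => hne h.symm)
      have h1 : ((b:ℝ)+1) ≤ (a:ℝ) := by exact_mod_cast hlt
      have : ((b:ℝ)+1) * ε / (j:ℝ) ≤ (a:ℝ) * ε / (j:ℝ) := by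
        apply (div_le_div_iff_of_pos_right hjR).mpr; nlinarith
      linarith [hA.1, hB.2]


lemma cellfacts (n j i : ℕ) (hn : 1 ≤ n) (hij : i < j) :
    0 ≤ (i:ℝ) * ((1:ℝ)/(n:ℝ)) / (j:ℝ) ∧
    (i:ℝ) * ((1:ℝ)/(n:ℝ)) / (j:ℝ) ≤ ((i:ℝ)+1) * ((1:ℝ)/(n:ℝ)) / (j:ℝ) ∧
    ((i:ℝ)+1) * ((1:ℝ)/(n:ℝ)) / (j:ℝ) ≤ 1/(n:ℝ) := by
  have hj1 : 1 ≤ j := by omega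
  have hjR : (0:ℝ) < (j:ℝ) := by exact_mod_cast hj1
  have hnR : (0:ℝ) < (n:ℝ) := by exact_mod_cast hn
  have hiR : (0:ℝ) ≤ (i:ℝ) := Nat.cast_nonneg i
  have hijR : (i:ℝ) + 1 ≤ (j:ℝ) := by exact_mod_cast hij
  refine ⟨by positivity, ?_, ?_⟩
  · apply (div_le_div_iff_of_pos_right hjR).mpr
    apply mul_le_mul_of_nonneg_right (by linarith) (by positivity)
  · rw [div_le_iff₀ hjR]
    have h1 : (0:ℝ) ≤ 1/(n:ℝ) := by positivity
    nlinarith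

/-- The key deterministic limit: the renormalized grid-counts of large increments of the
time-changed integral process converge to `(x0⁺)^α`. -/
lemma keyLim (α m : ℝ) (hα0 : 0 < α) (g W : ℝ → ℝ) (x0 : ℝ) (hg : Monotone g)
    (hrc : ∀ s : ℝ, 0 ≤ s → ContinuousWithinAt g (Ici s) s)
    (hsand : ∀ δ > (0:ℝ), ∃ s₀ > (0:ℝ), ∀ q r : ℝ, 0 ≤ q → q ≤ r → r ≤ s₀ →
      |(W r - W q) - x0 * (g r - g q)| ≤ δ * (g r - g q))
    (hcount : ∀ b > (0:ℝ), Tendsto (fun n : ℕ => (n : ℝ) ^ (1 - α * m) *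
        (({s : ℝ | s ∈ Ioc (0:ℝ) (1/(n:ℝ)) ∧
          b * (g s - leftLim g s) > (1/(n:ℝ)) ^ m}.ncard : ℝ)))
        atTop (𝓝 (b ^ α))) :
    limsup (fun n : ℕ => ((n:ℝ≥0∞) ^ (1 - α * m)) *
      liminf (fun j : ℕ => (((Finset.range j).filter
        (fun i : ℕ => W (((i:ℝ)+1) * ((1:ℝ)/(n:ℝ)) / (j:ℝ)) - W ((i:ℝ) * ((1:ℝ)/(n:ℝ)) / (j:ℝ))
          > ((1:ℝ)/(n:ℝ)) ^ m)).card : ℝ≥0∞)) atTop) atTop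
    = ENNReal.ofReal ((max x0 0) ^ α) := by
  classical
  set c : ℕ → ℝ≥0∞ := fun n => (n:ℝ≥0∞) ^ (1 - α * m) with hc
  set G : ℕ → ℝ≥0∞ := fun n => liminf (fun j : ℕ => (((Finset.range j).filter
        (fun i : ℕ => W (((i:ℝ)+1) * ((1:ℝ)/(n:ℝ)) / (j:ℝ)) - W ((i:ℝ) * ((1:ℝ)/(n:ℝ)) / (j:ℝ))
          > ((1:ℝ)/(n:ℝ)) ^ m)).card : ℝ≥0∞)) atTop with hG
  set L : ℝ≥0∞ := limsup (fun n : ℕ => c n * G n) atTop with hL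
  show L = ENNReal.ofReal ((max x0 0) ^ α)
  set J : ℝ → ℕ → Set ℝ := fun b n => {s : ℝ | s ∈ Ioc (0:ℝ) (1/(n:ℝ)) ∧
      b * (g s - leftLim g s) > (1/(n:ℝ)) ^ m} with hJ
  -- convergence of the renormalized jump counts, in `ℝ≥0∞`
  have hcountE : ∀ b, 0 < b → Tendsto (fun n : ℕ => c n * (((J b n).ncard : ℕ) : ℝ≥0∞))
      atTop (𝓝 (ENNReal.ofReal (b ^ α))) := by
    intro b hb
    have h1 := ENNReal.tendsto_ofReal (hcount b hb)
    apply h1.congr'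
    filter_upwards [eventually_ge_atTop 1] with n hn
    have hn0 : (0:ℝ) < (n:ℝ) := by exact_mod_cast hn
    rw [ENNReal.ofReal_mul (Real.rpow_nonneg hn0.le _)]
    congr 1
    · simp only [hc]
      rw [← ENNReal.ofReal_rpow_of_pos hn0, ENNReal.ofReal_natCast]
    · exact ENNReal.ofReal_natCast _
  -- the uniform upper bound
  have upper : ∀ δ, 0 < δ → L ≤ ENNReal.ofReal ((max x0 0 + 2*δ) ^ α) := by
    intro δ hδ
    obtain ⟨s₀, hs₀, hsa⟩ := hsand δ hδ
    have hB0 : (0:ℝ) < max x0 0 + δ := by positivity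
    have hB : (0:ℝ) < max x0 0 + 2*δ := by positivity
    have hev : ∀ᶠ n : ℕ in atTop,
        c n * G n ≤ c n * (((J (max x0 0 + 2*δ) n).ncard : ℕ) : ℝ≥0∞) := by
      have h2 : ∀ᶠ n : ℕ in atTop, (1:ℝ)/(n:ℝ) < s₀ :=
        tendsto_one_div_atTop_nhds_zero_nat.eventually (eventually_lt_nhds hs₀)
      filter_upwards [eventually_ge_atTop 1, h2] with n hn1 hns₀
      have hnR : (0:ℝ) < (n:ℝ) := by exact_mod_cast hn1
      have hε : (0:ℝ) < 1/(n:ℝ) := by positivity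
      have hθpos : (0:ℝ) < (1/(n:ℝ)) ^ m := Real.rpow_pos_of_pos hε m
      have hθ' : (0:ℝ) < (1/(n:ℝ)) ^ m / (max x0 0 + δ) := by positivity
      apply mul_le_mul_right
      -- compare the `W`-count with the `g`-count cell by cell
      have hsub : ∀ j : ℕ, ((Finset.range j).filter
          (fun i : ℕ => W (((i:ℝ)+1) * ((1:ℝ)/(n:ℝ)) / (j:ℝ)) - W ((i:ℝ) * ((1:ℝ)/(n:ℝ)) / (j:ℝ))
            > (1/(n:ℝ)) ^ m)) ⊆ ((Finset.range j).filter
          (fun i : ℕ => (1/(n:ℝ)) ^ m / (max x0 0 + δ) <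
            g (((i:ℝ)+1) * ((1:ℝ)/(n:ℝ)) / (j:ℝ)) - g ((i:ℝ) * ((1:ℝ)/(n:ℝ)) / (j:ℝ)))) := by
        intro j i hi
        rw [Finset.mem_filter] at hi ⊢
        obtain ⟨hij, hWinc⟩ := hi
        refine ⟨hij, ?_⟩
        rw [Finset.mem_range] at hij
        obtain ⟨hq0, hqr, hr⟩ := cellfacts n j i hn1 hij
        have hsand' := hsa _ _ hq0 hqr (hr.trans hns₀.le)
        have hΔ : 0 ≤ g (((i:ℝ)+1) * ((1:ℝ)/(n:ℝ)) / (j:ℝ)) - g ((i:ℝ) * ((1:ℝ)/(n:ℝ)) / (j:ℝ)) :=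
          sub_nonneg.mpr (hg hqr)
        have habs := (abs_le.mp hsand').2
        rw [div_lt_iff₀ hB0]
        nlinarith [le_max_left x0 0]
      -- conclude via `gridUpper`
      have hfin' := finite_jumps g hg hθ' (1/(n:ℝ))
      have hjev := gridUpper g hg hrc hθ' hε
      have hfinJ : (J (max x0 0 + 2*δ) n).Finite := by
        apply (finite_jumps g hg (θ := ((1/(n:ℝ)) ^ m) / (max x0 0 + 2*δ)) (by positivity)
          (1/(n:ℝ))).subset
        intro s hs
        exact ⟨hs.1, by rw [div_le_iff₀ hB]; nlinarith [hs.2]⟩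
      have hcard : ∀ᶠ j : ℕ in atTop, (((Finset.range j).filter
          (fun i : ℕ => W (((i:ℝ)+1) * ((1:ℝ)/(n:ℝ)) / (j:ℝ)) - W ((i:ℝ) * ((1:ℝ)/(n:ℝ)) / (j:ℝ))
            > (1/(n:ℝ)) ^ m)).card : ℝ≥0∞) ≤ (((J (max x0 0 + 2*δ) n).ncard : ℕ) : ℝ≥0∞) := by
        filter_upwards [hjev] with j hj
        have h1 := Finset.card_le_card (hsub j)
        have h2 : hfin'.toFinset.card ≤ (J (max x0 0 + 2*δ) n).ncard := by
          rw [Set.ncard_eq_toFinset_card _ hfinJ]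
          apply Finset.card_le_card
          intro s hsT
          rw [Set.Finite.mem_toFinset] at hsT ⊢
          refine ⟨hsT.1, ?_⟩
          have h3 := hsT.2
          rw [div_le_iff₀ hB0] at h3
          show (1/(n:ℝ)) ^ m < _
          nlinarith
        have := (h1.trans hj).trans h2
        exact_mod_cast Nat.cast_le.mpr this
      exact liminf_le_of_frequently_le' hcard.frequently
    calc L ≤ limsup (fun n : ℕ => c n * (((J (max x0 0 + 2*δ) n).ncard : ℕ) : ℝ≥0∞)) atTop :=
          limsup_le_limsup hev
    _ = ENNReal.ofReal ((max x0 0 + 2*δ) ^ α) := (hcountE _ hB).limsup_eq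
  -- the lower bound in the case `0 < x0`
  have lower : ∀ δ, 0 < δ → δ < x0 → ENNReal.ofReal ((x0 - δ) ^ α) ≤ L := by
    intro δ hδ hδx
    obtain ⟨s₀, hs₀, hsa⟩ := hsand δ hδ
    have hx0δ : (0:ℝ) < x0 - δ := by linarith
    have hev : ∀ᶠ n : ℕ in atTop,
        c n * (((J (x0 - δ) n).ncard : ℕ) : ℝ≥0∞) ≤ c n * G n := by
      have h2 : ∀ᶠ n : ℕ in atTop, (1:ℝ)/(n:ℝ) < s₀ :=
        tendsto_one_div_atTop_nhds_zero_nat.eventually (eventually_lt_nhds hs₀)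
      filter_upwards [eventually_ge_atTop 1, h2] with n hn1 hns₀
      have hnR : (0:ℝ) < (n:ℝ) := by exact_mod_cast hn1
      have hε : (0:ℝ) < 1/(n:ℝ) := by positivity
      have hθpos : (0:ℝ) < (1/(n:ℝ)) ^ m := Real.rpow_pos_of_pos hε m
      have hθ' : (0:ℝ) < (1/(n:ℝ)) ^ m / (x0 - δ) := by positivity
      apply mul_le_mul_right
      -- the jump set coincides with the set used in `gridLower`
      have hSeq : J (x0 - δ) n = {s : ℝ | s ∈ Ioc (0:ℝ) (1/(n:ℝ)) ∧
          (1/(n:ℝ)) ^ m / (x0 - δ) < g s - leftLim g s} := by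
        ext s
        simp only [hJ, Set.mem_setOf_eq, and_congr_right_iff]
        intro _
        rw [div_lt_iff₀ hx0δ]
        constructor <;> intro h <;> nlinarith
      have hfinS : {s : ℝ | s ∈ Ioc (0:ℝ) (1/(n:ℝ)) ∧
          (1/(n:ℝ)) ^ m / (x0 - δ) < g s - leftLim g s}.Finite := by
        apply (finite_jumps g hg hθ' (1/(n:ℝ))).subset
        intro s hs
        exact ⟨hs.1, hs.2.le⟩
      have hjev := gridLower g hg hθ' hε hfinS
      have hsub : ∀ j : ℕ, ((Finset.range j).filter
          (fun i : ℕ => (1/(n:ℝ)) ^ m / (x0 - δ) <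
            g (((i:ℝ)+1) * ((1:ℝ)/(n:ℝ)) / (j:ℝ)) - g ((i:ℝ) * ((1:ℝ)/(n:ℝ)) / (j:ℝ))))
          ⊆ ((Finset.range j).filter
          (fun i : ℕ => W (((i:ℝ)+1) * ((1:ℝ)/(n:ℝ)) / (j:ℝ)) - W ((i:ℝ) * ((1:ℝ)/(n:ℝ)) / (j:ℝ))
            > (1/(n:ℝ)) ^ m)) := by
        intro j i hi
        rw [Finset.mem_filter] at hi ⊢
        obtain ⟨hij, hginc⟩ := hi
        refine ⟨hij, ?_⟩
        rw [Finset.mem_range] at hij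
        obtain ⟨hq0, hqr, hr⟩ := cellfacts n j i hn1 hij
        have hsand' := hsa _ _ hq0 hqr (hr.trans hns₀.le)
        have habs := (abs_le.mp hsand').1
        rw [div_lt_iff₀ hx0δ] at hginc
        show (1/(n:ℝ)) ^ m < _
        nlinarith
      have hcard : ∀ᶠ j : ℕ in atTop, (((J (x0 - δ) n).ncard : ℕ) : ℝ≥0∞) ≤
          (((Finset.range j).filter
          (fun i : ℕ => W (((i:ℝ)+1) * ((1:ℝ)/(n:ℝ)) / (j:ℝ)) - W ((i:ℝ) * ((1:ℝ)/(n:ℝ)) / (j:ℝ))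
            > (1/(n:ℝ)) ^ m)).card : ℝ≥0∞) := by
        filter_upwards [hjev] with j hj
        have h1 := Finset.card_le_card (hsub j)
        have h2 : (J (x0 - δ) n).ncard ≤ hfinS.toFinset.card := by
          rw [hSeq, Set.ncard_eq_toFinset_card _ hfinS]
        exact_mod_cast Nat.cast_le.mpr (h2.trans (hj.trans h1))
      exact le_liminf_of_le (by isBoundedDefault) hcard
    calc ENNReal.ofReal ((x0 - δ) ^ α)
        = limsup (fun n : ℕ => c n * (((J (x0 - δ) n).ncard : ℕ) : ℝ≥0∞)) atTop :=
          ((hcountE _ hx0δ).limsup_eq).symm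
    _ ≤ L := limsup_le_limsup hev
  -- conclude
  have hub : L ≤ ENNReal.ofReal ((max x0 0) ^ α) := by
    have hseq : Tendsto (fun k : ℕ => ENNReal.ofReal ((max x0 0 + 2*(1/((k:ℝ)+1))) ^ α))
        atTop (𝓝 (ENNReal.ofReal ((max x0 0) ^ α))) := by
      apply ENNReal.tendsto_ofReal
      have h1 : Tendsto (fun k : ℕ => max x0 0 + 2*(1/((k:ℝ)+1))) atTop (𝓝 (max x0 0)) := by
        have h2 : Tendsto (fun k : ℕ => 1/((k:ℝ)+1)) atTop (𝓝 0) :=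
          tendsto_one_div_add_atTop_nhds_zero_nat
        have := tendsto_const_nhds (x := max x0 0) (f := atTop (α := ℕ)) |>.add
          ((h2.const_mul 2))
        simpa using this
      exact ((Real.continuousAt_rpow_const _ α (Or.inr hα0.le)).tendsto).comp h1
    apply ge_of_tendsto hseq
    filter_upwards with k
    exact upper _ (by positivity)
  rcases le_or_gt x0 0 with hx | hx
  · rw [max_eq_right hx] at hub ⊢
    refine le_antisymm hub ?_
    rw [Real.zero_rpow hα0.ne', ENNReal.ofReal_zero]
    exact zero_le
  · rw [max_eq_left hx.le] at hub ⊢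
    refine le_antisymm hub ?_
    have hdlt : Tendsto (fun k : ℕ => x0/((k:ℝ)+2)) atTop (𝓝 0) :=
      Tendsto.div_atTop tendsto_const_nhds
        (tendsto_atTop_add_const_right atTop 2 tendsto_natCast_atTop_atTop)
    have hseq : Tendsto (fun k : ℕ => ENNReal.ofReal ((x0 - x0/((k:ℝ)+2)) ^ α))
        atTop (𝓝 (ENNReal.ofReal (x0 ^ α))) := by
      apply ENNReal.tendsto_ofReal
      have h1 : Tendsto (fun k : ℕ => x0 - x0/((k:ℝ)+2)) atTop (𝓝 x0) := by
        have := tendsto_const_nhds (x := x0) (f := atTop (α := ℕ)) |>.sub hdlt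
        simpa using this
      exact ((Real.continuousAt_rpow_const _ α (Or.inr hα0.le)).tendsto).comp h1
    apply le_of_tendsto hseq
    filter_upwards with k
    refine lower _ (by positivity) ?_
    apply div_lt_self hx
    have : (0:ℝ) ≤ (k:ℝ) := Nat.cast_nonneg k
    linarith


/-- Measurability of the renormalized grid-count functionals. -/
lemma meas_count {Ω : Type*} [mΩ : MeasurableSpace Ω]
    (f h : ℕ → ℕ → ℕ → Ω → ℝ) (θ : ℕ → ℝ) (e : ℕ → ℝ≥0∞)
    (hf : ∀ n j i, i < j → Measurable (f n j i)) (hh : ∀ n j i, i < j → Measurable (h n j i)) :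
    Measurable (fun ω => limsup (fun n : ℕ => e n * liminf (fun j : ℕ =>
      (((Finset.range j).filter (fun i : ℕ => f n j i ω - h n j i ω > θ n)).card : ℝ≥0∞))
      atTop) atTop) := by
  classical
  apply Measurable.limsup
  intro n
  apply Measurable.const_mul
  apply Measurable.liminf
  intro j
  have heq : (fun ω => (((Finset.range j).filter
      (fun i : ℕ => f n j i ω - h n j i ω > θ n)).card : ℝ≥0∞))
      = fun ω => ∑ i ∈ Finset.range j,
        if f n j i ω - h n j i ω > θ n then (1:ℝ≥0∞) else 0 := by
    funext ω
    rw [Finset.card_filter, Nat.cast_sum]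
    congr 1
    funext i
    split <;> simp
  rw [heq]
  apply Finset.measurable_sum
  intro i hi
  rw [Finset.mem_range] at hi
  exact Measurable.ite
    (measurableSet_lt measurable_const ((hf n j i hi).sub (hh n j i hi)))
    measurable_const measurable_const


end Stmt11Aux

open Stmt11Aux MeasurableSpace in
/-- Key measurability step of Theorem 1: the initial value `X 0` can be recovered from
the germ σ-field `⋂_{t>0} σ(Ŷ_s : 0 ≤ s ≤ t)` of the time-changed integral process
`Ŷ_ℓ = ∫_0^{τ_ℓ} X_u du`, provided the jump counts of `τ` satisfy almost surely the
law of large numbers `n^(1-αm) N_{1/n,b} → b^α` for all `b > 0`. -/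
theorem stmt11 (α m : ℝ) (hα : α ∈ Set.Ioo (0 : ℝ) 1) (hm : m > 2 / α)
    {Ω : Type*} [MeasurableSpace Ω] (P : Measure Ω) [IsProbabilityMeasure P]
    (X τ : ℝ → Ω → ℝ)
    (hX_meas : ∀ s : ℝ, Measurable (X s)) (hτ_meas : ∀ s : ℝ, Measurable (τ s))
    (hX_rc : ∀ ω : Ω, ∀ s ≥ (0 : ℝ), ContinuousWithinAt (fun u => X u ω) (Set.Ici s) s)
    (hX_int : ∀ ω : Ω, LocallyIntegrableOn (fun u => X u ω) (Set.Ici 0))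
    (hτ_mono : ∀ ω : Ω, MonotoneOn (fun s => τ s ω) (Set.Ici 0))
    (hτ_rc : ∀ ω : Ω, ∀ s ≥ (0 : ℝ), ContinuousWithinAt (fun u => τ u ω) (Set.Ici s) s)
    (hτ0 : ∀ ω : Ω, τ 0 ω = 0) (hτ_nonneg : ∀ ω : Ω, ∀ s ≥ (0 : ℝ), 0 ≤ τ s ω)
    (Y : ℝ → Ω → ℝ) (hY : ∀ ℓ : ℝ, ∀ ω : Ω, Y ℓ ω = ∫ u in (0 : ℝ)..(τ ℓ ω), X u ω)
    (N : ℝ → ℝ → Ω → ℕ)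
    (hN : ∀ ε > (0 : ℝ), ∀ b : ℝ, ∀ ω : Ω,
      N ε b ω = {s ∈ Set.Ioc (0 : ℝ) ε |
        b * (τ s ω - leftLim (fun u => τ u ω) s) > ε ^ m}.ncard)
    (hLLN : ∀ᵐ ω ∂P, ∀ b > (0 : ℝ),
      Tendsto (fun n : ℕ => (n : ℝ) ^ (1 - α * m) * (N (1 / n) b ω : ℝ))
        atTop (nhds (b ^ α))) :
    ∃ Z : Ω → ℝ,
      Measurable[⨅ t ∈ Set.Ioi (0 : ℝ), ⨆ s ∈ Set.Icc (0 : ℝ) t,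
        MeasurableSpace.comap (Y s) inferInstance] Z ∧
      ∀ᵐ ω ∂P, Z ω = X 0 ω := by
  classical
  obtain ⟨hα0, hα1⟩ := hα
  have hαne : α ≠ 0 := ne_of_gt hα0
  set HH : ℝ → ℕ → ℕ → Ω → ℕ := fun σ n j ω => ((Finset.range j).filter
    (fun i : ℕ => σ * Y (((i:ℝ)+1) * ((1:ℝ)/(n:ℝ)) / (j:ℝ)) ω
      - σ * Y ((i:ℝ) * ((1:ℝ)/(n:ℝ)) / (j:ℝ)) ω
      > ((1:ℝ)/(n:ℝ)) ^ m)).card with hHH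
  set LL : ℝ → Ω → ℝ≥0∞ := fun σ ω => limsup (fun n : ℕ => ((n:ℝ≥0∞) ^ (1 - α * m)) *
      liminf (fun j : ℕ => ((HH σ n j ω : ℕ) : ℝ≥0∞)) atTop) atTop with hLL
  refine ⟨fun ω => (LL 1 ω).toReal ^ α⁻¹ - (LL (-1) ω).toReal ^ α⁻¹, ?_, ?_⟩
  · -- measurability with respect to the germ σ-algebra
    have hlevel : ∀ t : ℝ, 0 < t →
        Measurable[⨆ s ∈ Set.Icc (0:ℝ) t, MeasurableSpace.comap (Y s) inferInstance]
        (fun ω => (LL 1 ω).toReal ^ α⁻¹ - (LL (-1) ω).toReal ^ α⁻¹) := by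
      intro t ht
      set Mt : MeasurableSpace Ω :=
        ⨆ s ∈ Set.Icc (0:ℝ) t, MeasurableSpace.comap (Y s) inferInstance with hMt
      have hYm : ∀ s : ℝ, 0 ≤ s → s ≤ t → Measurable[Mt] (Y s) := by
        intro s h0 h1
        rw [measurable_iff_comap_le, hMt]
        exact le_iSup₂ (f := fun (s : ℝ) (_ : s ∈ Set.Icc (0:ℝ) t) =>
          MeasurableSpace.comap (Y s) inferInstance) s ⟨h0, h1⟩
      obtain ⟨K, hK1, hKt⟩ : ∃ K : ℕ, 1 ≤ K ∧ (1:ℝ)/(K:ℝ) ≤ t := by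
        obtain ⟨K, hK⟩ := exists_nat_ge (1/t)
        have hKpos : (0:ℝ) < (K:ℝ) + 1 := by positivity
        refine ⟨K + 1, by omega, ?_⟩
        rw [div_le_iff₀ (by exact_mod_cast hKpos)]
        rw [div_le_iff₀ ht] at hK
        push_cast
        nlinarith
      -- the grid points of levels `n + K` all lie in `[0, t]`
      have hpoint : ∀ (a : ℝ), 0 ≤ a → ∀ n j : ℕ, a ≤ (j:ℝ) →
          0 ≤ a * ((1:ℝ)/((n + K : ℕ):ℝ)) / (j:ℝ) ∧
          a * ((1:ℝ)/((n + K : ℕ):ℝ)) / (j:ℝ) ≤ t := by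
        intro a ha n j haj
        have hnK : (1:ℝ) ≤ ((n + K : ℕ):ℝ) := by exact_mod_cast by omega
        have hnK0 : (0:ℝ) < ((n + K : ℕ):ℝ) := by linarith
        constructor
        · positivity
        · rcases Nat.eq_zero_or_pos j with rfl | hj
          · simpa using ht.le
          · have hjR : (0:ℝ) < (j:ℝ) := by exact_mod_cast hj
            have h2 : a * ((1:ℝ)/((n + K : ℕ):ℝ)) / (j:ℝ) ≤ (1:ℝ)/((n + K : ℕ):ℝ) := by
              rw [div_le_iff₀ hjR]
              have h3 : (0:ℝ) ≤ 1/((n + K : ℕ):ℝ) := by positivity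
              nlinarith
            have h4 : (1:ℝ)/((n + K : ℕ):ℝ) ≤ (1:ℝ)/(K:ℝ) := by
              apply one_div_le_one_div_of_le
              · exact_mod_cast hK1
              · exact_mod_cast by omega
            linarith
      have hmeas : ∀ σ : ℝ, Measurable[Mt] (LL σ) := by
        intro σ
        have hshift : LL σ = fun ω => limsup (fun n : ℕ =>
            (((n + K : ℕ):ℝ≥0∞) ^ (1 - α * m)) *
            liminf (fun j : ℕ => ((HH σ (n + K) j ω : ℕ) : ℝ≥0∞)) atTop) atTop := by
          funext ω
          rw [hLL]
          exact (limsup_nat_add (fun n : ℕ => ((n:ℝ≥0∞) ^ (1 - α * m)) *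
            liminf (fun j : ℕ => ((HH σ n j ω : ℕ) : ℝ≥0∞)) atTop) K).symm
        rw [hshift]
        exact meas_count (mΩ := Mt)
          (fun n j i ω => σ * Y (((i:ℝ)+1) * ((1:ℝ)/((n + K : ℕ):ℝ)) / (j:ℝ)) ω)
          (fun n j i ω => σ * Y ((i:ℝ) * ((1:ℝ)/((n + K : ℕ):ℝ)) / (j:ℝ)) ω)
          (fun n => ((1:ℝ)/((n + K : ℕ):ℝ)) ^ m)
          (fun n => ((n + K : ℕ):ℝ≥0∞) ^ (1 - α * m))
          (fun n j i hij => by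
            obtain ⟨h0, h1⟩ := hpoint ((i:ℝ)+1) (by positivity) n j
              (by exact_mod_cast hij)
            exact (hYm _ h0 h1).const_mul σ)
          (fun n j i hij => by
            obtain ⟨h0, h1⟩ := hpoint (i:ℝ) (by positivity) n j
              (by
                have : (i:ℝ) + 1 ≤ (j:ℝ) := by exact_mod_cast hij
                linarith)
            exact (hYm _ h0 h1).const_mul σ)
      have hrpow : Measurable (fun x : ℝ => x ^ α⁻¹) :=
        (Real.continuous_rpow_const (inv_nonneg.mpr hα0.le)).measurable
      exact (hrpow.comp (ENNReal.measurable_toReal.comp (hmeas 1))).sub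
        (hrpow.comp (ENNReal.measurable_toReal.comp (hmeas (-1))))
    intro u hu
    exact MeasurableSpace.measurableSet_iInf.mpr fun t =>
      MeasurableSpace.measurableSet_iInf.mpr fun ht => hlevel t ht hu
  · -- almost sure identification of the initial value
    filter_upwards [hLLN] with ω hω
    set g : ℝ → ℝ := fun u => τ (max u 0) ω with hgdef
    have hgmono : Monotone g := fun u v huv => hτ_mono ω
      (mem_Ici.mpr (le_max_right u 0)) (mem_Ici.mpr (le_max_right v 0))
      (max_le_max huv le_rfl)
    have hgval : ∀ u : ℝ, 0 ≤ u → g u = τ u ω := by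
      intro u hu
      rw [hgdef]
      simp [max_eq_left hu]
    have hgrc : ∀ s : ℝ, 0 ≤ s → ContinuousWithinAt g (Ici s) s := by
      intro s hs
      apply (hτ_rc ω s hs).congr
      · intro u hu
        exact hgval u (hs.trans hu)
      · exact hgval s hs
    have hleft : ∀ s : ℝ, 0 < s → leftLim (fun u => τ u ω) s = leftLim g s := by
      intro s hs
      apply leftLim_eq_of_tendsto
      · apply (hgmono.tendsto_leftLim s).congr'
        filter_upwards [Ioo_mem_nhdsLT_of_mem (show s ∈ Ioc (0:ℝ) s from ⟨hs, le_rfl⟩)]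
          with u hu
        exact hgval u hu.1.le
    have hcount : ∀ b > (0:ℝ), Tendsto (fun n : ℕ => (n : ℝ) ^ (1 - α * m) *
        (({s : ℝ | s ∈ Ioc (0:ℝ) (1/(n:ℝ)) ∧
          b * (g s - leftLim g s) > (1/(n:ℝ)) ^ m}.ncard : ℝ)))
        atTop (𝓝 (b ^ α)) := by
      intro b hb
      apply (hω b hb).congr'
      filter_upwards [eventually_ge_atTop 1] with n hn
      have hn0 : (0:ℝ) < (n:ℝ) := by exact_mod_cast hn
      have hNn := hN (1/(n:ℝ)) (by positivity) b ω
      rw [hNn]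
      congr 2
      apply congrArg
      ext s
      simp only [Set.mem_setOf_eq, Set.sep_setOf]
      constructor
      · rintro ⟨hs1, hs2⟩
        exact ⟨hs1, by rwa [← hgval s hs1.1.le, hleft s hs1.1] at hs2⟩
      · rintro ⟨hs1, hs2⟩
        exact ⟨hs1, by rwa [← hgval s hs1.1.le, hleft s hs1.1]⟩
    -- the sandwich property for increments of `Y`
    have hbase : ∀ δ > (0:ℝ), ∃ s₀ > (0:ℝ), ∀ q r : ℝ, 0 ≤ q → q ≤ r → r ≤ s₀ →
        |(Y r ω - Y q ω) - X 0 ω * (g r - g q)| ≤ δ * (g r - g q) := by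
      intro δ hδ
      have hX0 := hX_rc ω 0 le_rfl
      have h2 : {y : ℝ | |y - X 0 ω| < δ} ∈ 𝓝 (X 0 ω) := by
        simpa [Metric.ball, Real.dist_eq] using Metric.ball_mem_nhds (X 0 ω) hδ
      have h1 : (fun u => X u ω) ⁻¹' {y : ℝ | |y - X 0 ω| < δ} ∈ 𝓝[Ici (0:ℝ)] 0 := hX0 h2
      rw [Metric.mem_nhdsWithin_iff] at h1
      obtain ⟨u₀, hu₀, hball⟩ := h1
      have hXbound : ∀ u : ℝ, 0 ≤ u → u < u₀ → |X u ω - X 0 ω| ≤ δ := by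
        intro u h0 hlt
        have hmem : u ∈ Metric.ball (0:ℝ) u₀ ∩ Ici 0 :=
          ⟨by simpa [Real.dist_eq, abs_of_nonneg h0] using hlt, h0⟩
        exact (hball hmem).le
      have hτrc := hτ_rc ω 0 le_rfl
      have h3 : {y : ℝ | |y - τ 0 ω| < u₀} ∈ 𝓝 (τ 0 ω) := by
        simpa [Metric.ball, Real.dist_eq] using Metric.ball_mem_nhds (τ 0 ω) hu₀
      have h4 : (fun u => τ u ω) ⁻¹' {y : ℝ | |y - τ 0 ω| < u₀} ∈ 𝓝[Ici (0:ℝ)] 0 := hτrc h3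
      rw [Metric.mem_nhdsWithin_iff] at h4
      obtain ⟨s₁, hs₁, hball₂⟩ := h4
      have hτbound : ∀ s : ℝ, 0 ≤ s → s < s₁ → τ s ω < u₀ := by
        intro s h0 hlt
        have hmem : s ∈ Metric.ball (0:ℝ) s₁ ∩ Ici 0 :=
          ⟨by simpa [Real.dist_eq, abs_of_nonneg h0] using hlt, h0⟩
        have := hball₂ hmem
        rw [Set.mem_preimage, Set.mem_setOf_eq, hτ0 ω, sub_zero] at this
        calc τ s ω ≤ |τ s ω| := le_abs_self _
        _ < u₀ := this
      refine ⟨s₁/2, by positivity, ?_⟩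
      intro q r hq0 hqr hrs
      have hr0 : 0 ≤ r := hq0.trans hqr
      have ha0 : 0 ≤ τ q ω := hτ_nonneg ω q hq0
      have hab : τ q ω ≤ τ r ω := hτ_mono ω (mem_Ici.mpr hq0) (mem_Ici.mpr hr0) hqr
      have hbu : τ r ω < u₀ := hτbound r hr0 (by linarith)
      have hIcc : IntegrableOn (fun u => X u ω) (Icc (0:ℝ) (τ r ω)) volume :=
        (hX_int ω).integrableOn_compact_subset (fun x hx => hx.1) isCompact_Icc
      have hi1 : IntervalIntegrable (fun u => X u ω) volume 0 (τ q ω) := by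
        apply IntegrableOn.intervalIntegrable
        rw [uIcc_of_le ha0]
        exact hIcc.mono_set (Icc_subset_Icc le_rfl hab)
      have hi3 : IntervalIntegrable (fun u => X u ω) volume (τ q ω) (τ r ω) := by
        apply IntegrableOn.intervalIntegrable
        rw [uIcc_of_le hab]
        exact hIcc.mono_set (Icc_subset_Icc ha0 le_rfl)
      have hsplit : (∫ u in (0:ℝ)..(τ r ω), X u ω) - (∫ u in (0:ℝ)..(τ q ω), X u ω)
          = ∫ u in (τ q ω)..(τ r ω), X u ω := by
        rw [← intervalIntegral.integral_add_adjacent_intervals hi1 hi3]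
        ring
      have hconst : (∫ u in (τ q ω)..(τ r ω), (X u ω - X 0 ω))
          = (∫ u in (τ q ω)..(τ r ω), X u ω) - (τ r ω - τ q ω) * X 0 ω := by
        rw [intervalIntegral.integral_sub hi3 intervalIntegrable_const,
          intervalIntegral.integral_const]
        simp [smul_eq_mul]
      have hnorm : ‖∫ u in (τ q ω)..(τ r ω), (X u ω - X 0 ω)‖ ≤ δ * |τ r ω - τ q ω| := by
        apply intervalIntegral.norm_integral_le_of_norm_le_const
        intro x hx
        rw [Set.uIoc_of_le hab] at hx
        rw [Real.norm_eq_abs]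
        exact hXbound x (ha0.trans hx.1.le) (lt_of_le_of_lt hx.2 hbu)
      rw [Real.norm_eq_abs, hconst, abs_of_nonneg (by linarith : (0:ℝ) ≤ τ r ω - τ q ω)]
        at hnorm
      rw [hY r ω, hY q ω, hgval r hr0, hgval q hq0]
      calc |(∫ u in (0:ℝ)..(τ r ω), X u ω) - (∫ u in (0:ℝ)..(τ q ω), X u ω)
            - X 0 ω * (τ r ω - τ q ω)|
          = |(∫ u in (τ q ω)..(τ r ω), X u ω) - (τ r ω - τ q ω) * X 0 ω| := by
            rw [hsplit]; ring_nf
      _ ≤ δ * (τ r ω - τ q ω) := hnorm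
    -- apply the key limit for `σ = ±1`
    have happ : ∀ σ : ℝ, σ = 1 ∨ σ = -1 →
        LL σ ω = ENNReal.ofReal ((max (σ * X 0 ω) 0) ^ α) := by
      intro σ hσ
      have hsandσ : ∀ δ > (0:ℝ), ∃ s₀ > (0:ℝ), ∀ q r : ℝ, 0 ≤ q → q ≤ r → r ≤ s₀ →
          |((fun ℓ => σ * Y ℓ ω) r - (fun ℓ => σ * Y ℓ ω) q) - (σ * X 0 ω) * (g r - g q)|
            ≤ δ * (g r - g q) := by
        intro δ hδ
        obtain ⟨s₀, hs₀, hb⟩ := hbase δ hδ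
        refine ⟨s₀, hs₀, fun q r h0 h1 h2 => ?_⟩
        have hb' := hb q r h0 h1 h2
        have heq : (σ * Y r ω) - (σ * Y q ω) - (σ * X 0 ω) * (g r - g q)
            = σ * ((Y r ω - Y q ω) - X 0 ω * (g r - g q)) := by ring
        simp only []
        rw [heq]
        rcases hσ with rfl | rfl
        · rwa [one_mul]
        · rwa [neg_one_mul, abs_neg]
      exact keyLim α m hα0 g (fun ℓ => σ * Y ℓ ω) (σ * X 0 ω) hgmono hgrc hsandσ hcount
    have h1 := happ 1 (Or.inl rfl)
    have h2 := happ (-1) (Or.inr rfl)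
    have hclean : ∀ y : ℝ, (ENNReal.ofReal ((max y 0) ^ α)).toReal ^ α⁻¹ = max y 0 := by
      intro y
      rw [ENNReal.toReal_ofReal (Real.rpow_nonneg (le_max_right y 0) α)]
      rw [← Real.rpow_mul (le_max_right y 0), mul_inv_cancel₀ hαne, Real.rpow_one]
    show (LL 1 ω).toReal ^ α⁻¹ - (LL (-1) ω).toReal ^ α⁻¹ = X 0 ω
    rw [h1, h2, one_mul, neg_one_mul, hclean (X 0 ω), hclean (-(X 0 ω))]
    exact max_zero_sub_max_neg_zero_eq_self (X 0 ω)
end
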